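/- arXiv:1603.08476 — 5 statements merged into one kernel-verified Lean document; each statement's English description precedes it below -/
import Mathlib

section
/- For every real E with |E| < 2, the Stieltjes transform of the semicircle law converges on the real axis: lim_{ε↓0} ∫_{−2}^{2} ρ_sc(λ)/(E − iε − λ) dλ = (E + i√(4−E²))/2. -/
set_option maxHeartbeats 1000000

open Complex Filter Real intervalIntegral

-- trig integral
lemma trig_int (n : ℕ) :
    (∫ θ in (0:ℝ)..π, Real.sin θ * Real.sin ((n+1)*θ)) = if n = 0 then π/2 else 0 := by
  rcases n with _ | m
  · simp only [Nat.cast_zero, zero_add, one_mul, if_pos rfl]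
    have := integral_sin_sq (a := (0:ℝ)) (b := π)
    simpa [Real.sin_pi, Real.sin_zero, sq, mul_comm] using this
  · have hm : ((m:ℝ) + 2) ≠ 0 := by positivity
    have key : ∀ θ : ℝ, Real.sin θ * Real.sin ((m+1+1)*θ)
        = (Real.cos (((m:ℝ)+1)*θ) - Real.cos (((m:ℝ)+3)*θ))/2 := by
      intro θ
      have h1 : Real.cos (((m:ℝ)+1)*θ) - Real.cos (((m:ℝ)+3)*θ)
          = -2 * Real.sin ((((m:ℝ)+1)*θ + ((m:ℝ)+3)*θ)/2) * Real.sin ((((m:ℝ)+1)*θ - ((m:ℝ)+3)*θ)/2) :=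
        Real.cos_sub_cos _ _
      have h2 : (((m:ℝ)+1)*θ + ((m:ℝ)+3)*θ)/2 = ((m:ℝ)+2)*θ := by ring
      have h3 : (((m:ℝ)+1)*θ - ((m:ℝ)+3)*θ)/2 = -θ := by ring
      rw [h2, h3, Real.sin_neg] at h1
      push_cast
      rw [h1]; ring_nf
    rw [intervalIntegral.integral_congr (g := fun θ => (Real.cos (((m:ℝ)+1)*θ) - Real.cos (((m:ℝ)+3)*θ))/2) (fun θ _ => by push_cast; exact key θ)]
    have hc : ∀ k : ℕ, (∫ θ in (0:ℝ)..π, Real.cos (((k:ℝ)+1)*θ)) = 0 := by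
      intro k
      have hk : ((k:ℝ)+1) ≠ 0 := by positivity
      rw [intervalIntegral.integral_comp_mul_left (fun x => Real.cos x) hk]
      simp only [mul_zero, integral_cos, Real.sin_zero, sub_zero, smul_eq_mul]
      have : ((k:ℝ)+1) * π = (((k+1):ℕ):ℝ) * π := by push_cast; ring
      rw [this, Real.sin_nat_mul_pi, mul_zero]
    have hi1 : IntervalIntegrable (fun θ => Real.cos (((m:ℝ)+1)*θ)) MeasureTheory.volume 0 π :=
      (Real.continuous_cos.comp (continuous_const.mul continuous_id)).intervalIntegrable _ _
    have hi3 : IntervalIntegrable (fun θ => Real.cos (((m:ℝ)+3)*θ)) MeasureTheory.volume 0 π :=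
      (Real.continuous_cos.comp (continuous_const.mul continuous_id)).intervalIntegrable _ _
    have h3' : (∫ θ in (0:ℝ)..π, Real.cos (((m:ℝ)+3)*θ)) = 0 := by
      have := hc (m+2); push_cast at this ⊢; convert this using 2 with θ; ring_nf
    simp only [intervalIntegral.integral_div, intervalIntegral.integral_sub hi1 hi3, hc m, h3']
    simp

lemma hasSum_aux (s : ℂ) (hs : ‖s‖ < 1) (θ : ℝ) :
    HasSum (fun n : ℕ => s^(n+1) * ((Real.sin ((n+1)*θ) : ℝ) : ℂ))
      (s * (Real.sin θ : ℝ) / (1 - 2*s*(Real.cos θ : ℝ) + s^2)) := by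
  set a := Complex.exp (θ * Complex.I) with ha_def
  set b := Complex.exp (-θ * Complex.I) with hb_def
  have hab : a * b = 1 := by
    rw [ha_def, hb_def, ← Complex.exp_add]; ring_nf; exact Complex.exp_zero
  have hna : ‖a‖ = 1 := by
    rw [ha_def]; exact Complex.norm_exp_ofReal_mul_I θ
  have hnb : ‖b‖ = 1 := by
    rw [hb_def]; simpa using Complex.norm_exp_ofReal_mul_I (-θ)
  have hsa : ‖s * a‖ < 1 := by rw [norm_mul, hna, mul_one]; exact hs
  have hsb : ‖s * b‖ < 1 := by rw [norm_mul, hnb, mul_one]; exact hs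
  have hne1 : 1 - s * a ≠ 0 := by
    intro h
    have h' : s * a = 1 := by linear_combination -h
    rw [h'] at hsa; simp at hsa
  have hne2 : 1 - s * b ≠ 0 := by
    intro h
    have h' : s * b = 1 := by linear_combination -h
    rw [h'] at hsb; simp at hsb
  have h1 : HasSum (fun n : ℕ => (s*a)^(n+1)) ((s*a) * (1 - s*a)⁻¹) :=
    by simpa [pow_succ'] using (hasSum_geometric_of_norm_lt_one hsa).mul_left (s*a)
  have h2 : HasSum (fun n : ℕ => (s*b)^(n+1)) ((s*b) * (1 - s*b)⁻¹) :=
    by simpa [pow_succ'] using (hasSum_geometric_of_norm_lt_one hsb).mul_left (s*b)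
  have h3 := (h2.sub h1).mul_left (Complex.I/2)
  have hsin : ∀ m : ℕ, ((Real.sin ((m:ℝ)*θ) : ℝ) : ℂ) = (b^m - a^m) * Complex.I / 2 := by
    intro m
    have h2s := Complex.two_sin (x := ((m:ℝ)*θ : ℝ))
    have hap : a^m = Complex.exp (((m:ℝ)*θ : ℝ) * Complex.I) := by
      rw [ha_def, ← Complex.exp_nat_mul]; push_cast; ring_nf
    have hbp : b^m = Complex.exp (-((m:ℝ)*θ : ℝ) * Complex.I) := by
      rw [hb_def, ← Complex.exp_nat_mul]; push_cast; ring_nf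
    rw [Complex.ofReal_sin]
    push_cast
    rw [← hap, ← hbp] at h2s
    push_cast at h2s
    linear_combination h2s/2
  have hfun : (fun n : ℕ => (Complex.I/2) * ((s*b)^(n+1) - (s*a)^(n+1)))
      = fun n : ℕ => s^(n+1) * ((Real.sin ((n+1)*θ) : ℝ) : ℂ) := by
    funext n
    have := hsin (n+1)
    push_cast at this ⊢
    rw [this, mul_pow, mul_pow]
    ring
  rw [hfun] at h3
  refine (congrArg (HasSum _) ?_).mpr h3
  have hcos : ((Real.cos θ : ℝ) : ℂ) = (a + b)/2 := by
    have := Complex.two_cos (x := (θ:ℂ))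
    rw [Complex.ofReal_cos]
    rw [ha_def, hb_def]
    linear_combination this/2
  have hden : 1 - 2*s*(Real.cos θ : ℝ) + s^2 = (1 - s*a) * (1 - s*b) := by
    rw [hcos]; linear_combination (-(s^2)) * hab
  rw [hden]
  have hsinθ : ((Real.sin θ : ℝ) : ℂ) = (b - a) * Complex.I / 2 := by
    simpa using hsin 1
  rw [hsinθ]
  field_simp
  ring_nf

lemma key_integral (s : ℂ) (hs : ‖s‖ < 1) (hs0 : s ≠ 0) :
    (∫ θ in (0:ℝ)..π, ((2*Real.sin θ : ℝ):ℂ) *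
      (((2*Real.sin θ/(2*Real.pi) : ℝ):ℂ) / ((s + s⁻¹) - ((2*Real.cos θ:ℝ):ℂ)))) = s := by
  have hpi : (0:ℝ) < π := Real.pi_pos
  have hDne : ∀ θ : ℝ, (1 - 2*s*((Real.cos θ:ℝ):ℂ) + s^2) ≠ 0 := by
    intro θ
    set a := Complex.exp (θ * Complex.I) with ha_def
    set b := Complex.exp (-θ * Complex.I) with hb_def
    have hab : a * b = 1 := by
      rw [ha_def, hb_def, ← Complex.exp_add]; ring_nf; exact Complex.exp_zero
    have hna : ‖a‖ = 1 := Complex.norm_exp_ofReal_mul_I θ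
    have hnb : ‖b‖ = 1 := by rw [hb_def]; simpa using Complex.norm_exp_ofReal_mul_I (-θ)
    have hcos : ((Real.cos θ : ℝ) : ℂ) = (a + b)/2 := by
      have := Complex.two_cos (x := (θ:ℂ))
      rw [Complex.ofReal_cos]; rw [ha_def, hb_def]; linear_combination this/2
    have hden : 1 - 2*s*((Real.cos θ:ℝ):ℂ) + s^2 = (1 - s*a) * (1 - s*b) := by
      rw [hcos]; linear_combination (-(s^2)) * hab
    have hne1 : 1 - s * a ≠ 0 := by
      intro h
      have h' : s * a = 1 := by linear_combination -h
      have hlt : ‖s * a‖ < 1 := by rw [norm_mul, hna, mul_one]; exact hs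
      rw [h'] at hlt; simp at hlt
    have hne2 : 1 - s * b ≠ 0 := by
      intro h
      have h' : s * b = 1 := by linear_combination -h
      have hlt : ‖s * b‖ < 1 := by rw [norm_mul, hnb, mul_one]; exact hs
      rw [h'] at hlt; simp at hlt
    rw [hden]; exact mul_ne_zero hne1 hne2
  set F : ℕ → ℝ → ℂ := fun n θ => s^(n+1) * ((2/π * Real.sin θ * Real.sin ((n+1)*θ) : ℝ):ℂ) with hF_def
  set H : ℝ → ℂ := fun θ => ((2*Real.sin θ : ℝ):ℂ) *
      (((2*Real.sin θ/(2*Real.pi) : ℝ):ℂ) / ((s + s⁻¹) - ((2*Real.cos θ:ℝ):ℂ))) with hH_def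
  have hsum : ∀ θ : ℝ, HasSum (fun n => F n θ) (H θ) := by
    intro θ
    have h0 := (hasSum_aux s hs θ).mul_left (((2/π * Real.sin θ : ℝ)):ℂ)
    have hD := hDne θ
    have hzden : (s + s⁻¹) - ((2*Real.cos θ:ℝ):ℂ) = (1 - 2*s*((Real.cos θ:ℝ):ℂ) + s^2) / s := by
      field_simp; push_cast; ring
    have hHeq : H θ = ((2/π * Real.sin θ : ℝ):ℂ) *
        (s * (Real.sin θ : ℝ) / (1 - 2*s*((Real.cos θ:ℝ):ℂ) + s^2)) := by
      rw [hH_def]; simp only []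
      have hpi' : ((π:ℝ):ℂ) ≠ 0 := Complex.ofReal_ne_zero.mpr Real.pi_ne_zero
      rw [hzden, div_div_eq_mul_div, mul_div_assoc', mul_div_assoc']
      congr 1
      push_cast
      field_simp
    have hfun : (fun n => F n θ)
        = fun i : ℕ => (((2/π * Real.sin θ : ℝ)):ℂ) * (s^(i+1) * ((Real.sin ((i+1)*θ) : ℝ):ℂ)) := by
      funext n
      rw [hF_def]
      push_cast
      ring
    rw [hHeq, hfun]
    exact h0
  have hmain : HasSum (fun n => ∫ θ in (0:ℝ)..π, F n θ) (∫ θ in (0:ℝ)..π, H θ) := by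
    apply intervalIntegral.hasSum_integral_of_dominated_convergence
      (bound := fun n _ => (2/π) * ‖s‖^(n+1))
    · intro n
      apply Continuous.aestronglyMeasurable
      apply Continuous.mul continuous_const
      apply Complex.continuous_ofReal.comp
      continuity
    · intro n
      filter_upwards with t _
      rw [hF_def]
      simp only []
      rw [norm_mul, norm_pow, Complex.norm_real, Real.norm_eq_abs, abs_mul, abs_mul]
      have h3 : |2/π| * |Real.sin t| * |Real.sin (((n:ℝ)+1)*t)| ≤ 2/π := by
        rw [abs_of_pos (by positivity : (0:ℝ) < 2/π)]
        have h1 : |Real.sin t| ≤ 1 := Real.abs_sin_le_one t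
        have h2 : |Real.sin (((n:ℝ)+1)*t)| ≤ 1 := Real.abs_sin_le_one _
        have h5 : 2/π * |Real.sin t| * |Real.sin (((n:ℝ)+1)*t)| ≤ 2/π * 1 * 1 := by
          gcongr
        linarith
      have h4 := mul_le_mul_of_nonneg_left h3 (pow_nonneg (norm_nonneg s) (n+1))
      nlinarith [h4]
    · filter_upwards with t _
      apply Summable.mul_left
      have : Summable (fun n : ℕ => ‖s‖^(n+1)) := by
        simpa [pow_succ'] using (summable_geometric_of_lt_one (norm_nonneg s) hs).mul_left ‖s‖
      exact this
    · exact intervalIntegrable_const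
    · filter_upwards with t _
      exact hsum t
  have hint : ∀ n : ℕ, (∫ θ in (0:ℝ)..π, F n θ) = if n = 0 then s else 0 := by
    intro n
    rw [hF_def]
    simp only []
    rw [intervalIntegral.integral_const_mul]
    have h1 : (∫ θ in (0:ℝ)..π, ((2/π * Real.sin θ * Real.sin ((n+1)*θ) : ℝ):ℂ))
        = ((∫ θ in (0:ℝ)..π, (2/π * Real.sin θ * Real.sin ((n+1)*θ) : ℝ) : ℝ):ℂ) := by
      rw [← intervalIntegral.integral_ofReal]
    rw [h1]
    have h2 : (∫ θ in (0:ℝ)..π, (2/π * Real.sin θ * Real.sin ((n+1)*θ) : ℝ))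
        = if n = 0 then 1 else 0 := by
      rw [show (fun θ => (2/π * Real.sin θ * Real.sin ((n+1)*θ) : ℝ))
            = fun θ => (2/π) * (Real.sin θ * Real.sin ((n+1)*θ)) from funext fun θ => by ring]
      rw [intervalIntegral.integral_const_mul, trig_int n]
      rcases eq_or_ne n 0 with h | h
      · simp [h]
      · simp [h]
    rw [h2]
    rcases eq_or_ne n 0 with h | h <;> simp [h]
  rw [show (fun n => ∫ θ in (0:ℝ)..π, F n θ) = (fun n : ℕ => if n = 0 then s else 0)
      from funext hint] at hmain
  exact ((hasSum_ite_eq 0 s).unique hmain).symm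

lemma subst_lemma (z : ℂ) (hz : ∀ l : ℝ, z - (l:ℂ) ≠ 0) :
    (∫ l in (-2:ℝ)..2, ((Real.sqrt (4 - l^2) / (2*Real.pi) : ℝ):ℂ) / (z - (l:ℂ)))
    = ∫ θ in (0:ℝ)..π, ((2*Real.sin θ : ℝ):ℂ) *
        (((2*Real.sin θ/(2*Real.pi) : ℝ):ℂ) / (z - ((2*Real.cos θ:ℝ):ℂ))) := by
  set g : ℝ → ℂ := fun l => ((Real.sqrt (4 - l^2) / (2*Real.pi) : ℝ):ℂ) / (z - (l:ℂ)) with hg_def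
  have hgc : Continuous g := by
    apply Continuous.div
    · apply Complex.continuous_ofReal.comp
      apply Continuous.div_const
      exact (Real.continuous_sqrt.comp (by continuity))
    · continuity
    · exact fun l => hz l
  have hderiv : ∀ θ ∈ Set.uIcc (0:ℝ) π, HasDerivAt (fun θ : ℝ => 2*Real.cos θ)
      (-2*Real.sin θ) θ := by
    intro θ _
    have := (Real.hasDerivAt_cos θ).const_mul (2:ℝ)
    simpa [mul_comm, neg_mul, mul_neg] using this
  have hcont : ContinuousOn (fun θ : ℝ => -2*Real.sin θ) (Set.uIcc (0:ℝ) π) :=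
    (by continuity : Continuous fun θ : ℝ => -2*Real.sin θ).continuousOn
  have hsub := intervalIntegral.integral_comp_smul_deriv hderiv hcont hgc
  have h0 : 2*Real.cos 0 = 2 := by simp
  have hπ : 2*Real.cos π = -2 := by simp
  rw [h0, hπ] at hsub
  have : (∫ l in (2:ℝ)..(-2), g l) = - ∫ l in (-2:ℝ)..2, g l :=
    intervalIntegral.integral_symm _ _
  rw [this] at hsub
  have h2 : (∫ l in (-2:ℝ)..2, g l) = ∫ θ in (0:ℝ)..π, (2*Real.sin θ) • g (2*Real.cos θ) := by
    have h3 : (∫ l in (-2:ℝ)..2, g l)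
        = - ∫ x in (0:ℝ)..π, (-2*Real.sin x) • (g ∘ fun θ => 2*Real.cos θ) x := by
      rw [hsub]; ring
    rw [h3, ← intervalIntegral.integral_neg]
    apply intervalIntegral.integral_congr
    intro θ _
    simp only [Function.comp]
    rw [← neg_smul]
    norm_num
  rw [h2]
  apply intervalIntegral.integral_congr
  intro θ hθ
  rw [Set.uIcc_of_le Real.pi_pos.le] at hθ
  have hsin : Real.sin θ ≥ 0 := Real.sin_nonneg_of_mem_Icc hθ
  have hsqrt : Real.sqrt (4 - (2*Real.cos θ)^2) = 2*Real.sin θ := by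
    have h4 : 4 - (2*Real.cos θ)^2 = (2*Real.sin θ)^2 := by
      have := Real.sin_sq_add_cos_sq θ
      nlinarith
    rw [h4, Real.sqrt_sq (by positivity)]
  rw [hg_def]
  simp only []
  rw [hsqrt, Complex.real_smul]

lemma aux_lt_one {x y : ℝ} (h0 : 0 ≤ x) (hxy : x * y = 1) (hlt : x < y) : x < 1 := by
  nlinarith

lemma aux_norm_lt_one {x : ℝ} (h0 : 0 ≤ x) (h2 : x^2 < 1) : x < 1 := by nlinarith

noncomputable def pp (E ε : ℝ) : ℝ :=
  Real.sqrt ((Real.sqrt ((4 - E^2 + ε^2)^2 + (2*E*ε)^2) + (4 - E^2 + ε^2))/2)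

noncomputable def Sfun (E ε : ℝ) : ℂ :=
  (((E:ℂ) - (ε:ℂ)*Complex.I) + Complex.I*((pp E ε : ℝ) + Complex.I*((E*ε/pp E ε : ℝ))))/2

lemma eval_lemma (E ε : ℝ) (hE : |E| < 2) (hε : 0 < ε) :
    (∫ l in (-2:ℝ)..2, ((Real.sqrt (4 - l^2) / (2*Real.pi) : ℝ):ℂ)
      / (((E:ℂ) - (ε:ℂ)*Complex.I) - (l:ℂ))) = Sfun E ε := by
  have hE2 : E^2 < 4 := by nlinarith [abs_lt.mp hE |>.1, abs_lt.mp hE |>.2]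
  set A : ℝ := 4 - E^2 + ε^2 with hA_def
  have hApos : 0 < A := by nlinarith
  set R : ℝ := Real.sqrt (A^2 + (2*E*ε)^2) with hR_def
  have hR2 : R^2 = A^2 + (2*E*ε)^2 := Real.sq_sqrt (by positivity)
  have hRnn : 0 ≤ R := Real.sqrt_nonneg _
  set p : ℝ := pp E ε with hp_def
  have hp_eq : p = Real.sqrt ((R + A)/2) := rfl
  have hppos : 0 < p := by
    rw [hp_eq]
    apply Real.sqrt_pos.mpr
    nlinarith
  have hp2 : p^2 = (R + A)/2 := by
    rw [hp_eq]; exact Real.sq_sqrt (by nlinarith)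
  have hkey : p^2*p^2 - A*p^2 = E^2*ε^2 := by
    rw [hp2]; nlinarith [hR2]
  clear_value A R p
  set q : ℝ := E*ε/p with hq_def
  set z : ℂ := (E:ℂ) - (ε:ℂ)*Complex.I with hz_def
  set w : ℂ := ((p:ℝ):ℂ) + Complex.I*((q:ℝ):ℂ) with hw_def
  set s : ℂ := (z + Complex.I*w)/2 with hs_def
  clear_value q z w s
  -- w^2 = 4 - z^2
  have h1 : p^2 - q^2 = A := by
    rw [hq_def]
    field_simp
    nlinarith [hkey]
  have h2 : 2*p*q = 2*E*ε := by
    rw [hq_def]; field_simp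
  have hw2 : w^2 = 4 - z^2 := by
    have hl : w^2 = ((p^2 - q^2 : ℝ):ℂ) + ((2*p*q:ℝ):ℂ)*Complex.I := by
      rw [hw_def]; push_cast
      linear_combination ((q:ℂ)^2) * Complex.I_sq
    have hr : 4 - z^2 = ((A:ℝ):ℂ) + ((2*E*ε:ℝ):ℂ)*Complex.I := by
      rw [hz_def, hA_def]; push_cast
      linear_combination (-(ε:ℂ)^2) * Complex.I_sq
    rw [hl, hr, h1, h2]
  have hst : s * ((z - Complex.I*w)/2) = 1 := by
    rw [hs_def]
    linear_combination hw2/4 - (w^2/4) * Complex.I_sq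
  have hs0 : s ≠ 0 := left_ne_zero_of_mul_eq_one hst
  have hsinv : s⁻¹ = (z - Complex.I*w)/2 := inv_eq_of_mul_eq_one_right hst
  have hz_eq : z = s + s⁻¹ := by
    rw [hsinv, hs_def]; ring
  -- |s| < 1
  have hs_expl : s = (((E - q)/2 : ℝ):ℂ) + (((p - ε)/2 : ℝ):ℂ)*Complex.I := by
    rw [hs_def, hz_def, hw_def]; push_cast
    linear_combination ((q:ℂ)/2) * Complex.I_sq
  have ht_expl : s⁻¹ = (((E + q)/2 : ℝ):ℂ) + ((-(p + ε)/2 : ℝ):ℂ)*Complex.I := by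
    rw [hsinv, hz_def, hw_def]; push_cast
    linear_combination (-(q:ℂ)/2) * Complex.I_sq
  have hns : Complex.normSq s = ((E-q)/2)^2 + ((p-ε)/2)^2 := by
    rw [hs_expl]; exact Complex.normSq_add_mul_I _ _
  have hnt : Complex.normSq s⁻¹ = ((E+q)/2)^2 + (-(p+ε)/2)^2 := by
    rw [ht_expl]; exact Complex.normSq_add_mul_I _ _
  have hprod : Complex.normSq s * Complex.normSq s⁻¹ = 1 := by
    rw [← Complex.normSq_mul, mul_inv_cancel₀ hs0, Complex.normSq_one]
  have hqE : 0 ≤ E*q := by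
    rw [hq_def]
    rcases le_or_gt 0 E with h | h
    · positivity
    · have : E * (E*ε/p) = E^2*ε/p := by ring
      rw [this]; positivity
  have hdiff : Complex.normSq s < Complex.normSq s⁻¹ := by
    rw [hns, hnt]; nlinarith [hppos, hε, hqE]
  have hs1 : ‖s‖ < 1 := by
    have hlt : Complex.normSq s < 1 :=
      aux_lt_one (Complex.normSq_nonneg s) hprod hdiff
    have h2 : ‖s‖^2 < 1 := by rw [← Complex.sq_norm s] at hlt; exact hlt
    exact aux_norm_lt_one (norm_nonneg s) h2
  -- conclude
  have hzl : ∀ l : ℝ, z - (l:ℂ) ≠ 0 := by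
    intro l h
    have : (z - (l:ℂ)).im = 0 := by rw [h]; simp
    rw [hz_def] at this
    simp [Complex.sub_im, Complex.mul_im] at this
    exact hε.ne' this
  calc (∫ l in (-2:ℝ)..2, ((Real.sqrt (4 - l^2) / (2*Real.pi) : ℝ):ℂ) / (z - (l:ℂ)))
      = ∫ θ in (0:ℝ)..π, ((2*Real.sin θ : ℝ):ℂ) *
        (((2*Real.sin θ/(2*Real.pi) : ℝ):ℂ) / (z - ((2*Real.cos θ:ℝ):ℂ))) := subst_lemma z hzl
    _ = ∫ θ in (0:ℝ)..π, ((2*Real.sin θ : ℝ):ℂ) *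
        (((2*Real.sin θ/(2*Real.pi) : ℝ):ℂ) / ((s + s⁻¹) - ((2*Real.cos θ:ℝ):ℂ))) := by
          rw [← hz_eq]
    _ = s := key_integral s hs1 hs0
    _ = Sfun E ε := by
          simp only [hs_def, hz_def, hw_def, hq_def, hp_def, Sfun]

/-- the Stieltjes transform of the semicircle law converges, as ε ↓ 0,
to `(E + i√(4−E²))/2` for `|E| < 2`. -/
theorem semicircle_stieltjes_limit (E : ℝ) (hE : |E| < 2) :
    Filter.Tendsto
      (fun ε : ℝ => ∫ l in (-2:ℝ)..2,
        ((Real.sqrt (4 - l ^ 2) / (2 * Real.pi) : ℝ) : ℂ)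
          / ((E : ℂ) - (ε : ℂ) * Complex.I - (l : ℂ)))
      (nhdsWithin 0 (Set.Ioi 0))
      (nhds (((E : ℂ) + Complex.I * (Real.sqrt (4 - E ^ 2) : ℝ)) / 2)) := by

  have hE2 : E^2 < 4 := by nlinarith [(abs_lt.mp hE).1, (abs_lt.mp hE).2]
  have h4 : 0 < 4 - E^2 := by linarith
  have hpp0 : pp E 0 = Real.sqrt (4 - E^2) := by
    unfold pp
    have e1 : (4 - E^2 + (0:ℝ)^2) = 4 - E^2 := by ring
    have e2 : (2*E*(0:ℝ))^2 = 0 := by ring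
    rw [e1, e2, add_zero, Real.sqrt_sq h4.le,
      show (4 - E^2 + (4 - E^2))/2 = 4 - E^2 by ring]
  have hppos : 0 < pp E 0 := by rw [hpp0]; positivity
  have hppc : Continuous (fun ε : ℝ => pp E ε) := by
    unfold pp
    apply Real.continuous_sqrt.comp
    apply Continuous.div_const
    apply Continuous.add
    · apply Real.continuous_sqrt.comp
      continuity
    · continuity
  have hScont : ContinuousAt (fun ε : ℝ => Sfun E ε) 0 := by
    unfold Sfun
    apply ContinuousAt.div_const
    apply ContinuousAt.add
    · exact (continuousAt_const.sub
        ((Complex.continuous_ofReal.continuousAt).mul continuousAt_const))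
    · apply ContinuousAt.mul continuousAt_const
      apply ContinuousAt.add
      · exact Complex.continuous_ofReal.continuousAt.comp hppc.continuousAt
      · apply ContinuousAt.mul continuousAt_const
        apply ContinuousAt.comp Complex.continuous_ofReal.continuousAt
        exact ((continuous_const.mul continuous_id).continuousAt).div
          hppc.continuousAt hppos.ne'
  have hS0 : Sfun E 0 = ((E : ℂ) + Complex.I * (Real.sqrt (4 - E ^ 2) : ℝ)) / 2 := by
    unfold Sfun
    rw [hpp0]
    norm_num
  have hlim : Tendsto (fun ε : ℝ => Sfun E ε) (nhdsWithin 0 (Set.Ioi 0)) (nhds (Sfun E 0)) :=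
    hScont.tendsto.mono_left nhdsWithin_le_nhds
  rw [← hS0]
  apply Tendsto.congr' _ hlim
  filter_upwards [self_mem_nhdsWithin] with ε hε
  exact (eval_lemma E ε hE hε).symm
end

section
/- Let H be a complex Hilbert space, let A and A₀ be bounded self-adjoint operators with 0 ≤ A ≤ I and 0 ≤ A₀ ≤ I, let Λ, P, P̃ be orthogonal projections, and let δ, δ₁ ≥ 0 and Δ ∈ ℝ. Assume: (1) ΛAΛ ≤ ΛA₀Λ + δ·I; (2) ‖[Λ,P]‖ ≤ δ₁ and ‖[Λ,P̃]‖ ≤ δ₁; (3) [P̃, A₀] = 0; (4) (I − P̃)A₀(I − P̃) ≤ (1 − Δ)·I; (5) ‖P̃(I − P)‖ ≤ 1/2. Then Λ(I − P)A(I − P)Λ ≤ (1 − Δ/2 + δ + 4δ₁)·I. -/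
open ContinuousLinearMap Complex

section Aux
set_option linter.unusedSectionVars false
variable {H : Type*} [NormedAddCommGroup H] [InnerProductSpace ℂ H] [CompleteSpace H]

local notation "⟪" x ", " y "⟫" => @inner ℂ _ _ x y

lemma aux_symm {S : H →L[ℂ] H} (hS : IsSelfAdjoint S) (a b : H) :
    ⟪S a, b⟫ = ⟪a, S b⟫ :=
  ((isSelfAdjoint_iff_isSymmetric).mp hS) a b

lemma aux_re_inner_self (x : H) : (⟪x, x⟫ : ℂ).re = ‖x‖ ^ 2 := by
  rw [inner_self_eq_norm_sq_to_K]
  simp [← Complex.ofReal_pow]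

lemma aux_pos_re {T : H →L[ℂ] H} (hT : T.IsPositive) (x : H) : 0 ≤ (⟪T x, x⟫ : ℂ).re := by
  have := hT.re_inner_nonneg_left x
  exact this

lemma aux_proj_apply {S : H →L[ℂ] H} (hid : S ∘L S = S) (x : H) : S (S x) = S x := by
  have := ContinuousLinearMap.ext_iff.mp hid x
  simpa using this

lemma aux_contr {S : H →L[ℂ] H} (hS : IsSelfAdjoint S) (hid : S ∘L S = S) (x : H) :
    ‖S x‖ ≤ ‖x‖ := by
  have h1 : (⟪S x, S x⟫ : ℂ) = ⟪x, S x⟫ := by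
    rw [aux_symm hS, aux_proj_apply hid]
  have h2 : ‖S x‖ ^ 2 = (⟪x, S x⟫ : ℂ).re := by
    rw [← h1, aux_re_inner_self]
  have h3 : (⟪x, S x⟫ : ℂ).re ≤ ‖x‖ * ‖S x‖ := by
    calc (⟪x, S x⟫ : ℂ).re ≤ ‖(⟪x, S x⟫ : ℂ)‖ := Complex.re_le_norm _
      _ ≤ ‖x‖ * ‖S x‖ := norm_inner_le_norm _ _
  by_cases h0 : ‖S x‖ = 0
  · rw [h0]; exact norm_nonneg x
  · have hp : 0 < ‖S x‖ := lt_of_le_of_ne (norm_nonneg _) (Ne.symm h0)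
    nlinarith [h2, h3]

/-- Cauchy–Schwarz for positive operators. -/
lemma aux_cs {T : H →L[ℂ] H} (hT : T.IsPositive) (x y : H) :
    ‖(⟪T x, y⟫ : ℂ)‖ ^ 2 ≤ (⟪T x, x⟫ : ℂ).re * (⟪T y, y⟫ : ℂ).re := by
  by_cases hα : (⟪T x, y⟫ : ℂ) = 0
  · rw [hα]
    simp only [norm_zero, ne_eq, OfNat.ofNat_ne_zero, not_false_eq_true, zero_pow]
    exact mul_nonneg (aux_pos_re hT x) (aux_pos_re hT y)
  · set α : ℂ := ⟪T x, y⟫ with hαdef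
    have hnα : (0:ℝ) < ‖α‖ := norm_pos_iff.mpr hα
    set c : ℂ := (starRingEnd ℂ) α / (‖α‖ : ℂ) with hc
    have hcnorm : ‖c‖ = 1 := by
      rw [hc, norm_div, RCLike.norm_conj]
      rw [Complex.norm_real, Real.norm_of_nonneg hnα.le]
      exact div_self hnα.ne'
    set u : H := c • y with hu
    have hTu : T u = c • T y := by rw [hu, map_smul]
    have huu : (⟪T u, u⟫ : ℂ).re = (⟪T y, y⟫ : ℂ).re := by
      rw [hTu, hu, inner_smul_left, inner_smul_right, ← mul_assoc,
        ← Complex.normSq_eq_conj_mul_self, ← Complex.sq_norm, hcnorm]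
      simp
    have hxu : (⟪T x, u⟫ : ℂ) = (‖α‖ : ℂ) := by
      rw [hu, inner_smul_right, ← hαdef, hc, div_mul_eq_mul_div,
        ← Complex.normSq_eq_conj_mul_self, Complex.normSq_eq_norm_sq, sq]
      rw [Complex.ofReal_mul]
      field_simp
    have hux : (⟪T u, x⟫ : ℂ) = (‖α‖ : ℂ) := by
      rw [aux_symm hT.isSelfAdjoint, ← inner_conj_symm, hxu]
      simp
    have key : ∀ t : ℝ, 0 ≤ (⟪T y, y⟫ : ℂ).re * (t * t) + (-2 * ‖α‖) * t + (⟪T x, x⟫ : ℂ).re := by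
      intro t
      have h0 := aux_pos_re hT (x - (t:ℂ) • u)
      have hexp : (⟪T (x - (t:ℂ) • u), x - (t:ℂ) • u⟫ : ℂ)
          = ⟪T x, x⟫ - (t:ℂ) * ⟪T x, u⟫ - (t:ℂ) * ⟪T u, x⟫ + (t:ℂ) * (t:ℂ) * ⟪T u, u⟫ := by
        simp only [map_sub, map_smul, inner_sub_left, inner_sub_right, inner_smul_left,
          inner_smul_right, Complex.conj_ofReal]
        ring
      rw [hexp, hxu, hux] at h0
      simp only [Complex.add_re, Complex.sub_re, Complex.mul_re, Complex.ofReal_re,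
        Complex.ofReal_im, Complex.mul_im, zero_mul, mul_zero, sub_zero, add_zero,
        zero_add, zero_sub, neg_zero] at h0
      nlinarith [h0, huu]
    have hd := discrim_le_zero key
    rw [discrim] at hd
    nlinarith [hd]
lemma aux_form_le {T : H →L[ℂ] H} (hT' : ((1 : H →L[ℂ] H) - T).IsPositive) (z : H) :
    (⟪T z, z⟫ : ℂ).re ≤ ‖z‖ ^ 2 := by
  have h := aux_pos_re hT' z
  simp only [ContinuousLinearMap.sub_apply, ContinuousLinearMap.one_apply, inner_sub_left,
    Complex.sub_re] at h
  have := aux_re_inner_self z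
  linarith

lemma aux_inner_bound {T : H →L[ℂ] H} (hT : T.IsPositive)
    (hT' : ((1 : H →L[ℂ] H) - T).IsPositive) (a b : H) :
    ‖(⟪T a, b⟫ : ℂ)‖ ≤ ‖a‖ * ‖b‖ := by
  have h1 := aux_cs hT a b
  have h2 := aux_form_le hT' a
  have h3 := aux_form_le hT' b
  have h4 := aux_pos_re hT a
  have h5 := aux_pos_re hT b
  nlinarith [norm_nonneg (⟪T a, b⟫ : ℂ), norm_nonneg a, norm_nonneg b,
    mul_nonneg (norm_nonneg a) (norm_nonneg b), sq_nonneg (‖a‖ - ‖b‖), sq_nonneg (‖a‖ + ‖b‖)]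

lemma aux_perturb {T : H →L[ℂ] H} (hT : T.IsPositive)
    (hT' : ((1 : H →L[ℂ] H) - T).IsPositive) (v v' : H) :
    (⟪T v, v⟫ : ℂ).re ≤ (⟪T v', v'⟫ : ℂ).re + ‖v - v'‖ * (‖v‖ + ‖v'‖) := by
  have hsplit : (⟪T v, v⟫ : ℂ) = ⟪T (v - v'), v⟫ + ⟪T v', v - v'⟫ + ⟪T v', v'⟫ := by
    simp only [map_sub, inner_sub_left, inner_sub_right]
    ring
  have h1 : (⟪T (v - v'), v⟫ : ℂ).re ≤ ‖v - v'‖ * ‖v‖ := by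
    calc (⟪T (v - v'), v⟫ : ℂ).re ≤ ‖(⟪T (v - v'), v⟫ : ℂ)‖ := Complex.re_le_norm _
      _ ≤ ‖v - v'‖ * ‖v‖ := aux_inner_bound hT hT' _ _
  have h2 : (⟪T v', v - v'⟫ : ℂ).re ≤ ‖v'‖ * ‖v - v'‖ := by
    calc (⟪T v', v - v'⟫ : ℂ).re ≤ ‖(⟪T v', v - v'⟫ : ℂ)‖ := Complex.re_le_norm _
      _ ≤ ‖v'‖ * ‖v - v'‖ := aux_inner_bound hT hT' _ _
  have hre := congrArg Complex.re hsplit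
  simp only [Complex.add_re] at hre
  nlinarith [hre]

end Aux


local notation "⟪" x ", " y "⟫" => @inner ℂ _ _ x y

set_option maxHeartbeats 1000000 in
/-- Proposition 5.2 of the paper: if `0 ≤ A, A₀ ≤ I`, `Λ, P, P̃` are
orthogonal projections with `ΛAΛ ≤ ΛA₀Λ + δ`, `‖[Λ,P]‖ ≤ δ₁`, `‖[Λ,P̃]‖ ≤ δ₁`,
`[P̃, A₀] = 0`, `(I−P̃)A₀(I−P̃) ≤ (1−Δ)I` and `‖P̃(I−P)‖ ≤ 1/2`, then
`Λ(I−P)A(I−P)Λ ≤ (1 − Δ/2 + δ + 4δ₁)I` in the Loewner order. -/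
theorem projection_operator_bound
    {H : Type*} [NormedAddCommGroup H] [InnerProductSpace ℂ H] [CompleteSpace H]
    (A A₀ Λ P Pt : H →L[ℂ] H) (δ δ₁ Δ : ℝ) (hδ : 0 ≤ δ) (hδ₁ : 0 ≤ δ₁)
    (hA : A.IsPositive) (hA' : ((1 : H →L[ℂ] H) - A).IsPositive)
    (hA₀ : A₀.IsPositive) (hA₀' : ((1 : H →L[ℂ] H) - A₀).IsPositive)
    (hΛsa : IsSelfAdjoint Λ) (hΛidem : Λ ∘L Λ = Λ)
    (hPsa : IsSelfAdjoint P) (hPidem : P ∘L P = P)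
    (hPtsa : IsSelfAdjoint Pt) (hPtidem : Pt ∘L Pt = Pt)
    (h1 : ((Λ ∘L A₀ ∘L Λ + (δ : ℂ) • (1 : H →L[ℂ] H)) - Λ ∘L A ∘L Λ).IsPositive)
    (h2 : ‖Λ ∘L P - P ∘L Λ‖ ≤ δ₁)
    (h2' : ‖Λ ∘L Pt - Pt ∘L Λ‖ ≤ δ₁)
    (h3 : Pt ∘L A₀ = A₀ ∘L Pt)
    (h4 : (((1 - Δ : ℝ) : ℂ) • (1 : H →L[ℂ] H)
        - ((1 : H →L[ℂ] H) - Pt) ∘L A₀ ∘L ((1 : H →L[ℂ] H) - Pt)).IsPositive)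
    (h5 : ‖Pt ∘L ((1 : H →L[ℂ] H) - P)‖ ≤ 1 / 2) :
    (((1 - Δ / 2 + δ + 4 * δ₁ : ℝ) : ℂ) • (1 : H →L[ℂ] H)
      - Λ ∘L ((1 : H →L[ℂ] H) - P) ∘L A ∘L ((1 : H →L[ℂ] H) - P) ∘L Λ).IsPositive := by
  set Q : H →L[ℂ] H := (1 : H →L[ℂ] H) - P with hQ
  set Qt : H →L[ℂ] H := (1 : H →L[ℂ] H) - Pt with hQt
  have hQsa : IsSelfAdjoint Q := (IsSelfAdjoint.one _).sub hPsa
  have hQtsa : IsSelfAdjoint Qt := (IsSelfAdjoint.one _).sub hPtsa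
  have hQidem : Q ∘L Q = Q := by
    ext z
    simp [hQ, ContinuousLinearMap.sub_apply, ContinuousLinearMap.one_apply, map_sub,
      aux_proj_apply hPidem]
  have hQtidem : Qt ∘L Qt = Qt := by
    ext z
    simp [hQt, ContinuousLinearMap.sub_apply, ContinuousLinearMap.one_apply, map_sub,
      aux_proj_apply hPtidem]
  constructor
  · -- self-adjointness
    rw [← isSelfAdjoint_iff_isSymmetric]
    apply IsSelfAdjoint.sub
    · rw [IsSelfAdjoint, star_smul, star_one]
      simp [Complex.star_def, Complex.conj_ofReal]
    · rw [isSelfAdjoint_iff']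
      simp only [ContinuousLinearMap.adjoint_comp, hΛsa.adjoint_eq, hQsa.adjoint_eq,
        hA.isSelfAdjoint.adjoint_eq, ContinuousLinearMap.comp_assoc]
  · intro x
    rw [ContinuousLinearMap.reApplyInnerSelf_apply]
    set v : H := Q (Λ x) with hv
    set v' : H := Λ (Q x) with hv'
    -- basic norms
    have hvn : ‖v‖ ≤ ‖x‖ :=
      (aux_contr hQsa hQidem (Λ x)).trans (aux_contr hΛsa hΛidem x)
    have hv'n : ‖v'‖ ≤ ‖x‖ :=
      (aux_contr hΛsa hΛidem (Q x)).trans (aux_contr hQsa hQidem x)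
    have hQxn : ‖Q x‖ ≤ ‖x‖ := aux_contr hQsa hQidem x
    have hvv' : ‖v - v'‖ ≤ δ₁ * ‖x‖ := by
      have hvv : v - v' = (Λ ∘L P - P ∘L Λ) x := by
        simp only [hv, hv', hQ, ContinuousLinearMap.sub_apply, ContinuousLinearMap.one_apply,
          ContinuousLinearMap.comp_apply, map_sub]
        abel
      rw [hvv]
      calc ‖(Λ ∘L P - P ∘L Λ) x‖ ≤ ‖Λ ∘L P - P ∘L Λ‖ * ‖x‖ :=
            ContinuousLinearMap.le_opNorm _ _
        _ ≤ δ₁ * ‖x‖ := mul_le_mul_of_nonneg_right h2 (norm_nonneg x)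
    clear_value v v'
    -- Step A
    have stepA : (⟪A v, v⟫ : ℂ).re ≤ (⟪A v', v'⟫ : ℂ).re + 2 * δ₁ * ‖x‖ ^ 2 := by
      have h := aux_perturb hA hA' v v'
      have hb : ‖v - v'‖ * (‖v‖ + ‖v'‖) ≤ δ₁ * ‖x‖ * (2 * ‖x‖) :=
        mul_le_mul hvv' (by linarith) (by positivity) (mul_nonneg hδ₁ (norm_nonneg x))
      nlinarith [h, hb]
    -- Step B
    have stepB : (⟪A v', v'⟫ : ℂ).re ≤ (⟪A₀ v', v'⟫ : ℂ).re + δ * ‖x‖ ^ 2 := by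
      have h := aux_pos_re h1 (Q x)
      have e1 : (⟪((Λ ∘L A₀ ∘L Λ + (δ : ℂ) • (1 : H →L[ℂ] H)) - Λ ∘L A ∘L Λ) (Q x), Q x⟫ : ℂ)
          = ⟪A₀ v', v'⟫ + (δ : ℂ) * ⟪Q x, Q x⟫ - ⟪A v', v'⟫ := by
        simp only [ContinuousLinearMap.sub_apply, ContinuousLinearMap.add_apply,
          ContinuousLinearMap.comp_apply, ContinuousLinearMap.smul_apply,
          ContinuousLinearMap.one_apply, inner_sub_left, inner_add_left, inner_smul_left,
          Complex.conj_ofReal]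
        rw [aux_symm hΛsa (A₀ (Λ (Q x))), aux_symm hΛsa (A (Λ (Q x))), ← hv']
      have e2 : ((δ : ℂ) * ⟪Q x, Q x⟫).re = δ * ‖Q x‖ ^ 2 := by
        rw [Complex.mul_re, Complex.ofReal_re, Complex.ofReal_im, aux_re_inner_self]
        ring
      rw [e1] at h
      simp only [Complex.sub_re, Complex.add_re] at h
      rw [e2] at h
      have hsq : ‖Q x‖ ^ 2 ≤ ‖x‖ ^ 2 := by nlinarith [norm_nonneg (Q x)]
      nlinarith [mul_le_mul_of_nonneg_left hsq hδ]
    -- Step C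
    have stepC : (⟪A₀ v', v'⟫ : ℂ).re ≤ (⟪A₀ v, v⟫ : ℂ).re + 2 * δ₁ * ‖x‖ ^ 2 := by
      have h := aux_perturb hA₀ hA₀' v' v
      have hb : ‖v' - v‖ * (‖v'‖ + ‖v‖) ≤ δ₁ * ‖x‖ * (2 * ‖x‖) := by
        rw [norm_sub_rev]
        exact mul_le_mul hvv' (by linarith) (by positivity) (mul_nonneg hδ₁ (norm_nonneg x))
      nlinarith [h, hb]
    -- Step D setup
    set w1 : H := Pt v with hw1
    set w2 : H := v - w1 with hw2
    clear_value w1 w2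
    have hPtw2 : Pt w2 = 0 := by
      rw [hw2, map_sub, hw1, aux_proj_apply hPtidem, sub_self]
    have hQtw2 : Qt w2 = w2 := by
      rw [hQt]
      simp [ContinuousLinearMap.sub_apply, ContinuousLinearMap.one_apply, hPtw2]
    have hcomm : ∀ z : H, Pt (A₀ z) = A₀ (Pt z) := by
      intro z
      have := ContinuousLinearMap.ext_iff.mp h3 z
      simpa using this
    have cross1 : (⟪A₀ w1, w2⟫ : ℂ) = 0 := by
      have e : A₀ w1 = Pt (A₀ w1) := by
        rw [hcomm, hw1, aux_proj_apply hPtidem]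
      rw [e, aux_symm hPtsa, hPtw2, inner_zero_right]
    have cross2 : (⟪A₀ w2, w1⟫ : ℂ) = 0 := by
      rw [aux_symm hA₀.isSelfAdjoint, ← inner_conj_symm, cross1]
      simp
    have hsum : (⟪A₀ v, v⟫ : ℂ).re = (⟪A₀ w1, w1⟫ : ℂ).re + (⟪A₀ w2, w2⟫ : ℂ).re := by
      have hv12 : v = w1 + w2 := by rw [hw2]; abel
      have e : (⟪A₀ v, v⟫ : ℂ) = ⟪A₀ w1, w1⟫ + ⟪A₀ w1, w2⟫ + (⟪A₀ w2, w1⟫ + ⟪A₀ w2, w2⟫) := by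
        conv_lhs => rw [hv12]
        rw [map_add, inner_add_left, inner_add_right, inner_add_right]
      rw [cross1, cross2] at e
      have := congrArg Complex.re e
      simpa [Complex.add_re] using this
    have hpyth : ‖v‖ ^ 2 = ‖w1‖ ^ 2 + ‖w2‖ ^ 2 := by
      have horth : (⟪w1, w2⟫ : ℂ) = 0 := by
        rw [hw1, aux_symm hPtsa, hPtw2, inner_zero_right]
      have hv12 : v = w1 + w2 := by rw [hw2]; abel
      rw [hv12, @norm_add_sq ℂ, horth]
      simp
    have hw1n : ‖w1‖ ≤ ‖x‖ / 2 := by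
      have e : w1 = (Pt ∘L Q) (Λ x) := by
        simp [hw1, hv, ContinuousLinearMap.comp_apply]
      rw [e]
      calc ‖(Pt ∘L Q) (Λ x)‖ ≤ ‖Pt ∘L Q‖ * ‖Λ x‖ := ContinuousLinearMap.le_opNorm _ _
        _ ≤ (1 / 2) * ‖x‖ :=
            mul_le_mul h5 (aux_contr hΛsa hΛidem x) (norm_nonneg _) (by norm_num)
        _ = ‖x‖ / 2 := by ring
    have bound1 : (⟪A₀ w1, w1⟫ : ℂ).re ≤ ‖w1‖ ^ 2 := aux_form_le hA₀' w1
    have bound2 : (⟪A₀ w2, w2⟫ : ℂ).re ≤ (1 - Δ) * ‖w2‖ ^ 2 := by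
      have h := aux_pos_re h4 w2
      have e1 : (⟪(((1 - Δ : ℝ) : ℂ) • (1 : H →L[ℂ] H) - Qt ∘L A₀ ∘L Qt) w2, w2⟫ : ℂ)
          = ((1 - Δ : ℝ) : ℂ) * ⟪w2, w2⟫ - ⟪A₀ w2, w2⟫ := by
        simp only [ContinuousLinearMap.sub_apply, ContinuousLinearMap.smul_apply,
          ContinuousLinearMap.one_apply, ContinuousLinearMap.comp_apply, inner_sub_left,
          inner_smul_left, Complex.conj_ofReal]
        rw [hQtw2, aux_symm hQtsa (A₀ w2), hQtw2]
      have e2 : (((1 - Δ : ℝ) : ℂ) * ⟪w2, w2⟫).re = (1 - Δ) * ‖w2‖ ^ 2 := by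
        rw [Complex.mul_re, Complex.ofReal_re, Complex.ofReal_im, aux_re_inner_self]
        ring
      rw [e1] at h
      simp only [Complex.sub_re] at h
      rw [e2] at h
      linarith
    have bound2' : (⟪A₀ w2, w2⟫ : ℂ).re ≤ ‖w2‖ ^ 2 := aux_form_le hA₀' w2
    have hvsq : ‖v‖ ^ 2 ≤ ‖x‖ ^ 2 := pow_le_pow_left₀ (norm_nonneg v) hvn 2
    have hw1sq : ‖w1‖ ^ 2 ≤ ‖x‖ ^ 2 / 4 := by
      have h := pow_le_pow_left₀ (norm_nonneg w1) hw1n 2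
      have e : (‖x‖ / 2) ^ 2 = ‖x‖ ^ 2 / 4 := by ring
      linarith [h, e.le, e.ge]
    have stepD : (⟪A₀ v, v⟫ : ℂ).re ≤ (1 - Δ / 2) * ‖x‖ ^ 2 := by
      rcases le_or_gt Δ 1 with hΔ1 | hΔ1
      · rcases le_or_gt Δ 0 with hΔ0 | hΔ0
        · have f : 0 ≤ (-Δ / 2) * ‖x‖ ^ 2 :=
            mul_nonneg (by linarith) (sq_nonneg _)
          linarith [bound1, bound2', hsum, hpyth, hvsq]
        · have f1 : 0 ≤ (1 - Δ) * (‖x‖ ^ 2 - (‖w1‖ ^ 2 + ‖w2‖ ^ 2)) :=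
            mul_nonneg (by linarith) (by linarith [hpyth, hvsq])
          have f2 : 0 ≤ Δ * (‖x‖ ^ 2 / 4 - ‖w1‖ ^ 2) :=
            mul_nonneg hΔ0.le (by linarith)
          have f3 : 0 ≤ Δ * ‖x‖ ^ 2 := mul_nonneg hΔ0.le (sq_nonneg _)
          nlinarith [bound1, bound2, hsum, f1, f2, f3]
      · -- Δ > 1 forces x = 0
        have hx0 : x = 0 := by
          by_contra hx
          have hpos : (0:ℝ) < ‖x‖ ^ 2 := pow_pos (norm_pos_iff.mpr hx) 2
          have hQtA : (Qt ∘L A₀ ∘L Qt).IsPositive := by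
            have := hA₀.conj_adjoint Qt
            rwa [hQtsa.adjoint_eq] at this
          have p1 := aux_pos_re hQtA x
          have p2 := aux_pos_re h4 x
          have e1 : (⟪(((1 - Δ : ℝ) : ℂ) • (1 : H →L[ℂ] H) - Qt ∘L A₀ ∘L Qt) x, x⟫ : ℂ)
              = ((1 - Δ : ℝ) : ℂ) * ⟪x, x⟫ - ⟪(Qt ∘L A₀ ∘L Qt) x, x⟫ := by
            simp only [ContinuousLinearMap.sub_apply, ContinuousLinearMap.smul_apply,
              ContinuousLinearMap.one_apply, inner_sub_left, inner_smul_left,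
              Complex.conj_ofReal]
          have e2 : (((1 - Δ : ℝ) : ℂ) * ⟪x, x⟫).re = (1 - Δ) * ‖x‖ ^ 2 := by
            rw [Complex.mul_re, Complex.ofReal_re, Complex.ofReal_im, aux_re_inner_self]
            ring
          rw [e1] at p2
          simp only [Complex.sub_re] at p2
          rw [e2] at p2
          nlinarith [p1, p2]
        have hv0 : v = 0 := by rw [hv, hx0]; simp
        rw [hv0, hx0]
        simp
    -- assemble
    have main : (⟪A v, v⟫ : ℂ).re ≤ (1 - Δ / 2 + δ + 4 * δ₁) * ‖x‖ ^ 2 := by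
      linarith [stepA, stepB, stepC, stepD]
    have hTinner : (⟪Λ (Q (A v)), x⟫ : ℂ) = ⟪A v, v⟫ := by
      rw [aux_symm hΛsa, aux_symm hQsa, ← hv]
    have efin : (⟪((((1 - Δ / 2 + δ + 4 * δ₁ : ℝ) : ℂ) • (1 : H →L[ℂ] H)
        - Λ ∘L Q ∘L A ∘L Q ∘L Λ) x), x⟫ : ℂ).re
        = (1 - Δ / 2 + δ + 4 * δ₁) * ‖x‖ ^ 2 - (⟪A v, v⟫ : ℂ).re := by
      have e1 : (⟪((((1 - Δ / 2 + δ + 4 * δ₁ : ℝ) : ℂ) • (1 : H →L[ℂ] H)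
          - Λ ∘L Q ∘L A ∘L Q ∘L Λ) x), x⟫ : ℂ)
          = ((1 - Δ / 2 + δ + 4 * δ₁ : ℝ) : ℂ) * ⟪x, x⟫ - ⟪A v, v⟫ := by
        simp only [ContinuousLinearMap.sub_apply, ContinuousLinearMap.smul_apply,
          ContinuousLinearMap.one_apply, ContinuousLinearMap.comp_apply, inner_sub_left,
          inner_smul_left, Complex.conj_ofReal]
        rw [← hv, hTinner]
      rw [e1, Complex.sub_re, Complex.mul_re, Complex.ofReal_re, Complex.ofReal_im,
        aux_re_inner_self]
      ring
    have goal : 0 ≤ (⟪((((1 - Δ / 2 + δ + 4 * δ₁ : ℝ) : ℂ) • (1 : H →L[ℂ] H)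
        - Λ ∘L Q ∘L A ∘L Q ∘L Λ) x), x⟫ : ℂ).re := by
      rw [efin]; linarith
    exact goal
end

section
/- Let W > 0 and let F: ℝ → ℂ be Lipschitz with constant ℓ, i.e. |F(x) − F(y)| ≤ ℓ|x − y| for all x, y. Let B be the bounded integral operator on L²(ℝ) with kernel B(x,y) = (2π)^{−1/2}·W·e^{−W²(x−y)²/2}, and let M_F be the operator of multiplication by F. Then the commutator satisfies ‖[M_F, B]‖ ≤ √(2/π)·ℓ/W. -/
open MeasureTheory Real Filter
open scoped ENNReal NNReal



lemma integral_Ioi_mul_exp {b : ℝ} (hb : 0 < b) :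
    ∫ x : ℝ in Set.Ioi 0, x * Real.exp (-b * x ^ 2) = 1 / (2 * b) := by
  have hb' : (2 * b) ≠ 0 := by positivity
  have A : ∀ x : ℝ, HasDerivAt (fun x : ℝ => -(2 * b)⁻¹ * Real.exp (-b * x ^ 2))
      (x * Real.exp (-b * x ^ 2)) x := by
    intro x
    convert ((hasDerivAt_pow 2 x).const_mul (-b)).exp.const_mul (-(2 * b)⁻¹) using 1
    rotate_left 2
    field_simp
    ring
    · rfl
    · rfl
  have B : Tendsto (fun y : ℝ => -(2 * b)⁻¹ * Real.exp (-b * y ^ 2))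
      atTop (nhds (-(2 * b)⁻¹ * 0)) := by
    refine Tendsto.const_mul _ ?_
    refine Real.tendsto_exp_atBot.comp ?_
    exact (tendsto_pow_atTop two_ne_zero).const_mul_atTop_of_neg (neg_lt_zero.2 hb)
  have key := integral_Ioi_of_hasDerivAt_of_tendsto' (a := (0:ℝ))
    (f := fun x : ℝ => -(2 * b)⁻¹ * Real.exp (-b * x ^ 2))
    (fun x _ => A x) (integrable_mul_exp_neg_mul_sq hb).integrableOn B
  rw [key]
  simp [Real.exp_zero]

lemma integral_abs_mul_exp {b : ℝ} (hb : 0 < b) :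
    ∫ x : ℝ, |x| * Real.exp (-b * x ^ 2) = 1 / b := by
  calc ∫ x : ℝ, |x| * Real.exp (-b * x ^ 2)
      = ∫ x : ℝ, (fun t : ℝ => t * Real.exp (-b * t ^ 2)) |x| := by simp [sq_abs]
    _ = 1 / b := by
        rw [integral_comp_abs (f := fun t : ℝ => t * Real.exp (-b * t ^ 2)),
          integral_Ioi_mul_exp hb]
        field_simp



/-- if `F` is Lipschitz with constant `ℓ`, then the commutator
`[M_F, B]` of the multiplication operator by `F` with the Gaussian integral operator
`B`, i.e. the integral operator with kernel `(F(x) − F(y))·(2π)^{−1/2}·W·e^{−W²(x−y)²/2}`,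
has operator norm at most `√(2/π)·ℓ/W` on `L²(ℝ)`. -/
theorem commutator_bound (W ℓ : ℝ) (hW : 0 < W) (hℓ : 0 ≤ ℓ)
    (F : ℝ → ℂ) (hF : ∀ x y : ℝ, ‖F x - F y‖ ≤ ℓ * |x - y|)
    (T : Lp ℂ 2 (volume : Measure ℝ) →L[ℂ] Lp ℂ 2 (volume : Measure ℝ))
    (hT : ∀ f : Lp ℂ 2 (volume : Measure ℝ),
      ⇑(T f) =ᵐ[volume] fun x : ℝ =>
        ∫ y : ℝ, (F x - F y)
          * (((2 * Real.pi) ^ (-(1 : ℝ) / 2) * W * Real.exp (-W ^ 2 * (x - y) ^ 2 / 2) : ℝ) : ℂ)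
          * f y) :
    ‖T‖ ≤ Real.sqrt (2 / Real.pi) * ℓ / W := by
  have hπ : 0 < Real.pi := Real.pi_pos
  set C : ℝ := Real.sqrt (2 / Real.pi) * ℓ / W with hCdef
  have hC0 : 0 ≤ C := by rw [hCdef]; positivity
  -- the dominating kernel
  set g : ℝ → ℝ := fun u =>
    ℓ * |u| * ((2 * Real.pi) ^ (-(1 : ℝ) / 2) * W * Real.exp (-W ^ 2 * u ^ 2 / 2)) with hgdef
  have hg0 : ∀ u, 0 ≤ g u := fun u => by rw [hgdef]; positivity
  have hgeq : g = fun u =>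
      (ℓ * ((2 * Real.pi) ^ (-(1 : ℝ) / 2) * W)) * (|u| * Real.exp (-(W ^ 2 / 2) * u ^ 2)) := by
    funext u
    show ℓ * |u| * ((2 * Real.pi) ^ (-(1 : ℝ) / 2) * W * Real.exp (-W ^ 2 * u ^ 2 / 2)) = _
    rw [show -W ^ 2 * u ^ 2 / 2 = -(W ^ 2 / 2) * u ^ 2 by ring]
    ring
  have hb2 : (0:ℝ) < W ^ 2 / 2 := by positivity
  have hgcont : Continuous g := by rw [hgdef]; fun_prop
  have hgint : Integrable g := by
    rw [hgeq]
    refine Integrable.const_mul ?_ _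
    refine (integrable_mul_exp_neg_mul_sq hb2).abs.congr ?_
    refine Filter.Eventually.of_forall fun x => ?_
    beta_reduce
    rw [abs_mul, abs_of_pos (Real.exp_pos _)]
  have hCval : ∫ u : ℝ, g u = C := by
    rw [hgeq, integral_const_mul, integral_abs_mul_exp hb2, hCdef]
    have hsqrt : ((2 * Real.pi) : ℝ) ^ (-(1 : ℝ) / 2) = (Real.sqrt (2 * Real.pi))⁻¹ := by
      rw [show (-(1 : ℝ) / 2) = -(1 / 2) by norm_num, Real.rpow_neg (by positivity),
        Real.sqrt_eq_rpow]
    rw [hsqrt, Real.sqrt_mul (by norm_num : (0:ℝ) ≤ 2),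
      Real.sqrt_div (by norm_num : (0:ℝ) ≤ 2)]
    have hs2 : Real.sqrt 2 * Real.sqrt 2 = 2 := Real.mul_self_sqrt (by norm_num)
    have hsπ : 0 < Real.sqrt Real.pi := Real.sqrt_pos.mpr hπ
    have hs2' : 0 < Real.sqrt 2 := Real.sqrt_pos.mpr (by norm_num)
    field_simp
    linear_combination (-ℓ) * hs2
  -- pass to ℝ≥0∞
  set ge : ℝ → ℝ≥0∞ := fun u => ENNReal.ofReal (g u) with hgedef
  have hge_meas : Measurable ge := ENNReal.measurable_ofReal.comp hgcont.measurable
  have hgeC : ∫⁻ u, ge u = ENNReal.ofReal C := by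
    rw [hgedef, ← ofReal_integral_eq_lintegral_ofReal hgint (Filter.Eventually.of_forall hg0),
      hCval]
  have hker : ∀ x y : ℝ,
      (‖(F x - F y) * (((2 * Real.pi) ^ (-(1 : ℝ) / 2) * W
        * Real.exp (-W ^ 2 * (x - y) ^ 2 / 2) : ℝ) : ℂ)‖₊ : ℝ≥0∞) ≤ ge (x - y) := by
    intro x y
    rw [hgedef, ← enorm_eq_nnnorm, ← ofReal_norm_eq_enorm]
    apply ENNReal.ofReal_le_ofReal
    rw [norm_mul, Complex.norm_real, Real.norm_eq_abs,
      abs_of_nonneg (by positivity : (0:ℝ) ≤ (2 * Real.pi) ^ (-(1 : ℝ) / 2) * W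
        * Real.exp (-W ^ 2 * (x - y) ^ 2 / 2))]
    rw [hgdef]
    exact mul_le_mul_of_nonneg_right (hF x y) (by positivity)
  -- operator norm bound
  refine T.opNorm_le_bound hC0 fun f => ?_
  obtain hmeas := (Lp.aestronglyMeasurable f).aemeasurable
  set G : ℝ → ℂ := hmeas.mk _ with hGdef
  have hGmeas : Measurable G := hmeas.measurable_mk
  have hfG : ⇑f =ᵐ[volume] G := hmeas.ae_eq_mk
  set φ : ℝ → ℂ := fun x => ∫ y : ℝ, (F x - F y)
      * (((2 * Real.pi) ^ (-(1 : ℝ) / 2) * W * Real.exp (-W ^ 2 * (x - y) ^ 2 / 2) : ℝ) : ℂ)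
      * G y with hφdef
  have hTφ : ⇑(T f) =ᵐ[volume] φ := by
    refine (hT f).trans (Filter.Eventually.of_forall fun x => ?_)
    refine integral_congr_ae ?_
    filter_upwards [hfG] with y hy
    rw [hy]
  have hhalf : ∀ a : ℝ≥0∞, a ^ ((1:ℝ)/2) * a ^ ((1:ℝ)/2) = a := fun a => by
    rw [← ENNReal.rpow_add_of_nonneg _ _ (by norm_num) (by norm_num)]
    norm_num
  have hu2 : ∀ a : ℝ≥0∞, (a ^ ((1:ℝ)/2)) ^ (2:ℝ) = a := fun a => by
    rw [← ENNReal.rpow_mul]; norm_num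
  set B : ℝ → ℝ≥0∞ := fun x => ∫⁻ y, ge (x - y) * (‖G y‖₊ : ℝ≥0∞) ^ (2:ℝ) with hBdef
  -- pointwise Schur estimate
  have key : ∀ x : ℝ, (‖φ x‖₊ : ℝ≥0∞) ^ (2:ℝ) ≤ ENNReal.ofReal C * B x := by
    intro x
    have step1 : (‖φ x‖₊ : ℝ≥0∞) ≤ ∫⁻ y, ge (x - y) * ‖G y‖₊ := by
      refine (enorm_integral_le_lintegral_enorm _).trans (lintegral_mono fun y => ?_)
      rw [enorm_mul]
      exact mul_le_mul_left (hker x y) _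
    have hu : Measurable fun y : ℝ => (ge (x - y)) ^ ((1:ℝ)/2) :=
      (hge_meas.comp (measurable_const.sub measurable_id)).pow_const _
    have hv : Measurable fun y : ℝ => (ge (x - y)) ^ ((1:ℝ)/2) * (‖G y‖₊ : ℝ≥0∞) :=
      hu.mul hGmeas.nnnorm.coe_nnreal_ennreal
    have hpq : Real.HolderConjugate 2 2 := Real.HolderConjugate.two_two
    have hCS := ENNReal.lintegral_mul_le_Lp_mul_Lq volume hpq hu.aemeasurable hv.aemeasurable
    have hA : ∫⁻ y, ((ge (x - y)) ^ ((1:ℝ)/2)) ^ (2:ℝ) = ENNReal.ofReal C := by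
      simp only [hu2]
      rw [(Measure.measurePreserving_sub_left volume x).lintegral_comp hge_meas, hgeC]
    have hB : ∫⁻ y, ((ge (x - y)) ^ ((1:ℝ)/2) * (‖G y‖₊ : ℝ≥0∞)) ^ (2:ℝ) = B x := by
      refine lintegral_congr fun y => ?_
      rw [ENNReal.mul_rpow_of_nonneg _ _ (by norm_num : (0:ℝ) ≤ 2), hu2]
    have hCS' : ∫⁻ y, ge (x - y) * ‖G y‖₊
        ≤ (ENNReal.ofReal C) ^ ((1:ℝ)/2) * (B x) ^ ((1:ℝ)/2) := by
      calc ∫⁻ y, ge (x - y) * ‖G y‖₊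
          = ∫⁻ y, ((fun y : ℝ => (ge (x - y)) ^ ((1:ℝ)/2))
            * fun y : ℝ => (ge (x - y)) ^ ((1:ℝ)/2) * (‖G y‖₊ : ℝ≥0∞)) y := by
            refine lintegral_congr fun y => ?_
            simp only [Pi.mul_apply]
            rw [← mul_assoc, hhalf]
        _ ≤ (∫⁻ y, ((ge (x - y)) ^ ((1:ℝ)/2)) ^ (2:ℝ)) ^ ((1:ℝ)/2)
            * (∫⁻ y, ((ge (x - y)) ^ ((1:ℝ)/2) * (‖G y‖₊ : ℝ≥0∞)) ^ (2:ℝ)) ^ ((1:ℝ)/2) := by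
            simpa [one_div] using hCS
        _ = (ENNReal.ofReal C) ^ ((1:ℝ)/2) * (B x) ^ ((1:ℝ)/2) := by rw [hA, hB]
    calc (‖φ x‖₊ : ℝ≥0∞) ^ (2:ℝ)
        ≤ ((ENNReal.ofReal C) ^ ((1:ℝ)/2) * (B x) ^ ((1:ℝ)/2)) ^ (2:ℝ) :=
          ENNReal.rpow_le_rpow (step1.trans hCS') (by norm_num)
      _ = ENNReal.ofReal C * B x := by
          rw [ENNReal.mul_rpow_of_nonneg _ _ (by norm_num : (0:ℝ) ≤ 2), hu2, hu2]
  -- integrate in x and swap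
  have hswap : ∫⁻ x, B x = ENNReal.ofReal C * ∫⁻ y, (‖G y‖₊ : ℝ≥0∞) ^ (2:ℝ) := by
    have hprod : Measurable fun z : ℝ × ℝ => ge (z.1 - z.2) * (‖G z.2‖₊ : ℝ≥0∞) ^ (2:ℝ) :=
      (hge_meas.comp (measurable_fst.sub measurable_snd)).mul
        (((hGmeas.comp measurable_snd).nnnorm.coe_nnreal_ennreal).pow_const _)
    rw [hBdef]
    rw [lintegral_lintegral_swap hprod.aemeasurable]
    rw [← lintegral_const_mul' _ _ ENNReal.ofReal_ne_top]
    refine lintegral_congr fun y => ?_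
    have hm : Measurable fun x : ℝ => ge (x - y) :=
      hge_meas.comp (measurable_id.sub measurable_const)
    rw [lintegral_mul_const _ hm,
      (measurePreserving_sub_right volume y).lintegral_comp hge_meas, hgeC, mul_comm]
  have main : ∫⁻ x, (‖φ x‖₊ : ℝ≥0∞) ^ (2:ℝ)
      ≤ ENNReal.ofReal C * (ENNReal.ofReal C * ∫⁻ y, (‖G y‖₊ : ℝ≥0∞) ^ (2:ℝ)) := by
    calc ∫⁻ x, (‖φ x‖₊ : ℝ≥0∞) ^ (2:ℝ)
        ≤ ∫⁻ x, ENNReal.ofReal C * B x := lintegral_mono key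
      _ = ENNReal.ofReal C * ∫⁻ x, B x := lintegral_const_mul' _ _ ENNReal.ofReal_ne_top
      _ = _ := by rw [hswap]
  -- convert to eLpNorms
  have hsnorm : ∀ h : ℝ → ℂ, eLpNorm h 2 volume
      = (∫⁻ x, (‖h x‖₊ : ℝ≥0∞) ^ (2:ℝ)) ^ ((1:ℝ)/2) := by
    intro h
    rw [eLpNorm_eq_lintegral_rpow_enorm_toReal two_ne_zero ENNReal.ofNat_ne_top]
    norm_num
    rfl
  have hGfin : eLpNorm G 2 volume ≠ ⊤ := by
    rw [← eLpNorm_congr_ae hfG]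
    exact (Lp.eLpNorm_lt_top f).ne
  have hbound : eLpNorm φ 2 volume ≤ ENNReal.ofReal C * eLpNorm G 2 volume := by
    rw [hsnorm, hsnorm]
    calc (∫⁻ x, (‖φ x‖₊ : ℝ≥0∞) ^ (2:ℝ)) ^ ((1:ℝ)/2)
        ≤ (ENNReal.ofReal C * (ENNReal.ofReal C * ∫⁻ y, (‖G y‖₊ : ℝ≥0∞) ^ (2:ℝ))) ^ ((1:ℝ)/2) :=
          ENNReal.rpow_le_rpow main (by norm_num)
      _ = ENNReal.ofReal C * (∫⁻ y, (‖G y‖₊ : ℝ≥0∞) ^ (2:ℝ)) ^ ((1:ℝ)/2) := by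
          rw [ENNReal.mul_rpow_of_nonneg _ _ (by norm_num : (0:ℝ) ≤ 1/2),
            ENNReal.mul_rpow_of_nonneg _ _ (by norm_num : (0:ℝ) ≤ 1/2), ← mul_assoc, hhalf]
  rw [Lp.norm_def, Lp.norm_def, eLpNorm_congr_ae hTφ, eLpNorm_congr_ae hfG]
  calc (eLpNorm φ 2 volume).toReal
      ≤ (ENNReal.ofReal C * eLpNorm G 2 volume).toReal :=
        ENNReal.toReal_mono (ENNReal.mul_ne_top ENNReal.ofReal_ne_top hGfin) hbound
    _ = C * (eLpNorm G 2 volume).toReal := by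
        rw [ENNReal.toReal_mul, ENNReal.toReal_ofReal hC0]
end

section
/- For every q ∈ (0,1) there exist constants ε₀ > 0 and C > 0, depending only on q, with the following property: for every finite index set Γ ⊂ ℤ², every ε ≤ ε₀, and every complex matrix R = (R_{k,k'})_{k,k'∈Γ} with |R_{k,k'}| ≤ ε·q^{|k−k'|₁/2} for all k, k' ∈ Γ (where |k−k'|₁ = |k₁−k₁'| + |k₂−k₂'|), the matrix I + R is invertible and |(I + R)^{−1}_{k,k'}| ≤ C·q^{|k−k'|₁/4} for all k, k' ∈ Γ. -/
open Finset

/-- rpow to monoid pow conversion. -/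
lemma nsd_rpow_div (q : ℝ) (hq : 0 < q) (m : ℕ) :
    q ^ ((m : ℝ) / 4) = (q ^ ((1 : ℝ) / 4)) ^ m := by
  rw [← Real.rpow_natCast (q ^ ((1 : ℝ) / 4)) m, ← Real.rpow_mul hq.le]
  ring_nf

/-- uniform invertibility with exponential off-diagonal decay of the
inverse, for matrices indexed by a finite subset of `ℤ²` whose entries decay like
`ε·q^{|k−k'|₁/2}`. -/
theorem neumann_series_decay (q : ℝ) (hq : q ∈ Set.Ioo (0 : ℝ) 1) :
    ∃ ε₀ C : ℝ, 0 < ε₀ ∧ 0 < C ∧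
      ∀ (Γ : Finset (ℤ × ℤ)) (ε : ℝ) (R : Matrix Γ Γ ℂ),
        ε ≤ ε₀ →
        (∀ k k' : Γ, ‖R k k'‖
          ≤ ε * q ^ (((|(k : ℤ × ℤ).1 - (k' : ℤ × ℤ).1| + |(k : ℤ × ℤ).2 - (k' : ℤ × ℤ).2| : ℤ) : ℝ) / 2)) →
        IsUnit (1 + R) ∧
        ∀ k k' : Γ, ‖(1 + R)⁻¹ k k'‖
          ≤ C * q ^ (((|(k : ℤ × ℤ).1 - (k' : ℤ × ℤ).1| + |(k : ℤ × ℤ).2 - (k' : ℤ × ℤ).2| : ℤ) : ℝ) / 4) := by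
  obtain ⟨hq0, hq1⟩ := hq
  set r : ℝ := q ^ ((1 : ℝ) / 4) with hr_def
  have hr0 : 0 < r := Real.rpow_pos_of_pos hq0 _
  have hr1 : r < 1 := Real.rpow_lt_one hq0.le hq1 (by norm_num)
  set f : ℤ → ℝ := fun m => r ^ m.natAbs with hf_def
  have hfnn : ∀ m, 0 ≤ f m := fun m => pow_nonneg hr0.le _
  have hf : Summable f := by
    apply Summable.of_nat_of_neg
    · simpa [hf_def] using summable_geometric_of_lt_one hr0.le hr1
    · simpa [hf_def] using summable_geometric_of_lt_one hr0.le hr1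
  set t : ℝ := ∑' m : ℤ, f m with ht_def
  have ht1 : (1 : ℝ) ≤ t := by
    have := Summable.le_tsum hf 0 (fun i _ => hfnn i)
    simpa [hf_def] using this
  have ht2 : (1 : ℝ) ≤ t ^ 2 := by nlinarith
  have ht2' : 0 < t ^ 2 := lt_of_lt_of_le one_pos ht2
  have hfg : Summable (fun p : ℤ × ℤ => f p.1 * f p.2) :=
    hf.mul_of_nonneg hf hfnn hfnn
  have hS : ∀ (Γ : Finset (ℤ × ℤ)) (k : ℤ × ℤ),
      (∑ j ∈ Γ, r ^ ((k.1 - j.1).natAbs + (k.2 - j.2).natAbs)) ≤ t ^ 2 := by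
    intro Γ k
    set e : ℤ × ℤ ≃ ℤ × ℤ := (Equiv.subLeft k.1).prodCongr (Equiv.subLeft k.2) with he_def
    have hcomp : Summable (fun j : ℤ × ℤ => f (k.1 - j.1) * f (k.2 - j.2)) := by
      have := (e.summable_iff (f := fun p : ℤ × ℤ => f p.1 * f p.2)).2 hfg
      exact this
    calc (∑ j ∈ Γ, r ^ ((k.1 - j.1).natAbs + (k.2 - j.2).natAbs))
        = ∑ j ∈ Γ, f (k.1 - j.1) * f (k.2 - j.2) := by
          refine Finset.sum_congr rfl (fun j _ => ?_)
          simp [hf_def, pow_add]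
      _ ≤ ∑' j : ℤ × ℤ, f (k.1 - j.1) * f (k.2 - j.2) :=
          Summable.sum_le_tsum Γ (fun j _ => mul_nonneg (hfnn _) (hfnn _)) hcomp
      _ = ∑' p : ℤ × ℤ, f p.1 * f p.2 := e.tsum_eq (fun p : ℤ × ℤ => f p.1 * f p.2)
      _ = t ^ 2 := by
          rw [Summable.tsum_prod' hfg (fun b => hf.mul_left (f b))]
          simp_rw [tsum_mul_left]
          rw [tsum_mul_right, ← ht_def, sq]
  refine ⟨(2 * t ^ 2)⁻¹, 2, by positivity, two_pos, ?_⟩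
  intro Γ ε R hε hR
  set nn : Γ → Γ → ℕ := fun k k' =>
    ((k : ℤ × ℤ).1 - (k' : ℤ × ℤ).1).natAbs + ((k : ℤ × ℤ).2 - (k' : ℤ × ℤ).2).natAbs with hnn_def
  have hcast : ∀ k k' : Γ,
      ((|(k : ℤ × ℤ).1 - (k' : ℤ × ℤ).1| + |(k : ℤ × ℤ).2 - (k' : ℤ × ℤ).2| : ℤ) : ℝ)
        = (nn k k' : ℝ) := by
    intro k k'
    simp only [hnn_def]
    push_cast [Nat.cast_natAbs]
    ring
  have hq4 : ∀ m : ℕ, q ^ ((m : ℝ) / 4) = r ^ m := fun m => nsd_rpow_div q hq0 m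
  have hRr : ∀ k k' : Γ, ‖R k k'‖ ≤ ε * r ^ (2 * nn k k') := by
    intro k k'
    have h := hR k k'
    rw [hcast] at h
    have : q ^ ((nn k k' : ℝ) / 2) = r ^ (2 * nn k k') := by
      have h2 : ((nn k k' : ℝ)) / 2 = ((2 * nn k k' : ℕ) : ℝ) / 4 := by push_cast; ring
      rw [h2, hq4]
    rwa [this] at h
  have htri : ∀ k j k' : Γ, nn k k' ≤ nn k j + nn j k' := by
    intro k j k'
    have h1 : ((k : ℤ × ℤ).1 - (k' : ℤ × ℤ).1).natAbs
        ≤ ((k : ℤ × ℤ).1 - (j : ℤ × ℤ).1).natAbs + ((j : ℤ × ℤ).1 - (k' : ℤ × ℤ).1).natAbs := by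
      have := Int.natAbs_add_le ((k : ℤ × ℤ).1 - (j : ℤ × ℤ).1) ((j : ℤ × ℤ).1 - (k' : ℤ × ℤ).1)
      simpa using this
    have h2 : ((k : ℤ × ℤ).2 - (k' : ℤ × ℤ).2).natAbs
        ≤ ((k : ℤ × ℤ).2 - (j : ℤ × ℤ).2).natAbs + ((j : ℤ × ℤ).2 - (k' : ℤ × ℤ).2).natAbs := by
      have := Int.natAbs_add_le ((k : ℤ × ℤ).2 - (j : ℤ × ℤ).2) ((j : ℤ × ℤ).2 - (k' : ℤ × ℤ).2)
      simpa using this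
    simp only [hnn_def]
    omega
  have hrow : ∀ k : Γ, (∑ j : Γ, r ^ nn k j) ≤ t ^ 2 := by
    intro k
    have h := hS Γ (k : ℤ × ℤ)
    rw [← Finset.sum_coe_sort Γ
      (fun j => r ^ (((k : ℤ × ℤ).1 - j.1).natAbs + ((k : ℤ × ℤ).2 - j.2).natAbs))] at h
    exact h
  -- row sums of |R|
  have hRrow : ∀ (x : Γ → ℂ) (N : ℝ), 0 ≤ ε → (∀ j, ‖x j‖ ≤ N) →
      ∀ a : Γ, (∑ j : Γ, ‖R a j‖ * ‖x j‖) ≤ ε * t ^ 2 * N := by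
    intro x N hε0 hxN a
    have hN0 : 0 ≤ N := le_trans (norm_nonneg _) (hxN a)
    calc (∑ j : Γ, ‖R a j‖ * ‖x j‖)
        ≤ ∑ j : Γ, (ε * r ^ nn a j) * N := by
          refine Finset.sum_le_sum (fun j _ => ?_)
          have h1 : ‖R a j‖ ≤ ε * r ^ nn a j := by
            refine le_trans (hRr a j) ?_
            have : r ^ (2 * nn a j) ≤ r ^ nn a j :=
              pow_le_pow_of_le_one hr0.le hr1.le (by omega)
            exact mul_le_mul_of_nonneg_left this hε0
          exact mul_le_mul h1 (hxN j) (norm_nonneg _)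
            (mul_nonneg hε0 (pow_nonneg hr0.le _))
      _ = ε * (∑ j : Γ, r ^ nn a j) * N := by
          rw [Finset.mul_sum, Finset.sum_mul]
      _ ≤ ε * t ^ 2 * N := by
          refine mul_le_mul_of_nonneg_right (mul_le_mul_of_nonneg_left (hrow a) hε0) hN0
  have hεhalf : 0 ≤ ε → ε * t ^ 2 ≤ 1 / 2 := by
    intro hε0
    have h1 : ε * t ^ 2 ≤ (2 * t ^ 2)⁻¹ * t ^ 2 :=
      mul_le_mul_of_nonneg_right hε (by positivity)
    have h2 : (2 * t ^ 2)⁻¹ * t ^ 2 = 1 / 2 := by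
      field_simp
    linarith
  have hε0' : ∀ _ : Γ, 0 ≤ ε := by
    intro a
    have h := hRr a a
    have hnaa : nn a a = 0 := by simp [hnn_def]
    rw [hnaa] at h
    simpa using le_trans (norm_nonneg _) h
  -- invertibility
  have hker : ∀ z : Γ → ℂ, (1 + R).mulVec z = 0 → z = 0 := by
    intro z hz
    by_contra hzne
    have hex : ∃ a : Γ, z a ≠ 0 := by
      by_contra hc
      push_neg at hc
      exact hzne (funext hc)
    obtain ⟨a0, ha0⟩ := hex
    haveI : Nonempty {x // x ∈ Γ} := ⟨a0⟩
    obtain ⟨a, -, ha⟩ := Finset.exists_mem_eq_sup' Finset.univ_nonempty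
      (fun j : Γ => ‖z j‖)
    have hmax : ∀ j : Γ, ‖z j‖ ≤ ‖z a‖ := by
      intro j
      rw [← ha]
      exact Finset.le_sup' (fun j : Γ => ‖z j‖) (Finset.mem_univ j)
    have hzapos : 0 < ‖z a‖ :=
      lt_of_lt_of_le (by simpa using ha0) (hmax a0)
    have heq : z a + R.mulVec z a = 0 := by
      have := congrFun hz a
      rw [Matrix.add_mulVec, Matrix.one_mulVec] at this
      simpa using this
    have hza : ‖z a‖ = ‖R.mulVec z a‖ := by
      have : z a = -(R.mulVec z a) := by linear_combination heq
      rw [this, norm_neg]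
    have hbound : ‖R.mulVec z a‖ ≤ ε * t ^ 2 * ‖z a‖ := by
      refine le_trans ?_ (hRrow z (‖z a‖) (hε0' a) hmax a)
      rw [Matrix.mulVec]
      refine le_trans (norm_sum_le _ _) ?_
      refine Finset.sum_le_sum (fun j _ => ?_)
      rw [norm_mul]
    have hfin : ‖z a‖ ≤ 1 / 2 * ‖z a‖ := by
      calc ‖z a‖ = ‖R.mulVec z a‖ := hza
        _ ≤ ε * t ^ 2 * ‖z a‖ := hbound
        _ ≤ 1 / 2 * ‖z a‖ :=
            mul_le_mul_of_nonneg_right (hεhalf (hε0' a)) (norm_nonneg _)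
    linarith
  have hunit : IsUnit (1 + R) := by
    rw [← Matrix.mulVec_injective_iff_isUnit]
    intro x y hxy
    have : (1 + R).mulVec (x - y) = 0 := by
      rw [Matrix.mulVec_sub, hxy, sub_self]
    have := hker _ this
    exact sub_eq_zero.mp this
  refine ⟨hunit, ?_⟩
  set B : Matrix Γ Γ ℂ := (1 + R)⁻¹ with hB_def
  have hBeq : (1 + R) * B = 1 :=
    Matrix.mul_nonsing_inv _ ((Matrix.isUnit_iff_isUnit_det _).mp hunit)
  have hB : B = 1 - R * B := by
    have h1 : B + R * B = 1 := by
      rw [← hBeq, add_mul, one_mul]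
    exact (eq_sub_of_add_eq h1)
  intro k k'
  haveI : Nonempty {x // x ∈ Γ} := ⟨k⟩
  have hε0 : 0 ≤ ε := hε0' k
  set F : Γ × Γ → ℝ := fun p => ‖B p.1 p.2‖ / r ^ nn p.1 p.2 with hF_def
  set M : ℝ := Finset.univ.sup' Finset.univ_nonempty F with hM_def
  have hMle : ∀ a b : Γ, ‖B a b‖ ≤ M * r ^ nn a b := by
    intro a b
    have h1 : F (a, b) ≤ M := Finset.le_sup' F (Finset.mem_univ _)
    have := (div_le_iff₀ (pow_pos hr0 (nn a b))).mp h1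
    linarith [this]
  obtain ⟨p, -, hpM⟩ := Finset.exists_mem_eq_sup' (Finset.univ_nonempty
    (α := {x // x ∈ Γ} × {x // x ∈ Γ})) F
  have hM0 : 0 ≤ M := by
    rw [hM_def, hpM]
    exact div_nonneg (norm_nonneg _) (pow_nonneg hr0.le _)
  have hMB : M * r ^ nn p.1 p.2 = ‖B p.1 p.2‖ := by
    rw [hM_def, hpM]
    simp only [hF_def]
    field_simp
  have hent : ‖B p.1 p.2‖ ≤ r ^ nn p.1 p.2 * (1 + ε * t ^ 2 * M) := by
    have hBe : B p.1 p.2 = (1 : Matrix Γ Γ ℂ) p.1 p.2 - (R * B) p.1 p.2 := by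
      nth_rewrite 1 [hB]
      simp [Matrix.sub_apply]
    have h1 : ‖(1 : Matrix Γ Γ ℂ) p.1 p.2‖ ≤ r ^ nn p.1 p.2 := by
      by_cases hpe : p.1 = p.2
      · have h0 : nn p.1 p.2 = 0 := by simp [hnn_def, hpe]
        rw [h0, hpe, Matrix.one_apply_eq]
        simp
      · rw [Matrix.one_apply_ne hpe]
        simpa using pow_nonneg hr0.le (nn p.1 p.2)
    have h2 : ‖(R * B) p.1 p.2‖
        ≤ ε * t ^ 2 * M * r ^ nn p.1 p.2 := by
      rw [Matrix.mul_apply]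
      refine le_trans (norm_sum_le _ _) ?_
      calc (∑ j : Γ, ‖R p.1 j * B j p.2‖)
          ≤ ∑ j : Γ, (ε * r ^ nn p.1 j) * (M * r ^ nn p.1 p.2) := by
            refine Finset.sum_le_sum (fun j _ => ?_)
            rw [norm_mul]
            have hRj : ‖R p.1 j‖ ≤ ε * r ^ (2 * nn p.1 j) := hRr p.1 j
            have hBj : ‖B j p.2‖ ≤ M * r ^ nn j p.2 := hMle j p.2
            have hprod : (ε * r ^ (2 * nn p.1 j)) * (M * r ^ nn j p.2)
                ≤ (ε * r ^ nn p.1 j) * (M * r ^ nn p.1 p.2) := by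
              have hpow : r ^ (2 * nn p.1 j) * r ^ nn j p.2
                  ≤ r ^ nn p.1 j * r ^ nn p.1 p.2 := by
                have : r ^ (2 * nn p.1 j) * r ^ nn j p.2
                    = r ^ nn p.1 j * r ^ (nn p.1 j + nn j p.2) := by
                  rw [← pow_add, ← pow_add]; ring_nf
                rw [this]
                refine mul_le_mul_of_nonneg_left ?_ (pow_nonneg hr0.le _)
                exact pow_le_pow_of_le_one hr0.le hr1.le (htri p.1 j p.2)
              calc (ε * r ^ (2 * nn p.1 j)) * (M * r ^ nn j p.2)
                  = (ε * M) * (r ^ (2 * nn p.1 j) * r ^ nn j p.2) := by ring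
                _ ≤ (ε * M) * (r ^ nn p.1 j * r ^ nn p.1 p.2) :=
                    mul_le_mul_of_nonneg_left hpow (mul_nonneg hε0 hM0)
                _ = (ε * r ^ nn p.1 j) * (M * r ^ nn p.1 p.2) := by ring
            refine le_trans ?_ hprod
            exact mul_le_mul hRj hBj (norm_nonneg _)
              (mul_nonneg hε0 (pow_nonneg hr0.le _))
        _ = ε * (∑ j : Γ, r ^ nn p.1 j) * (M * r ^ nn p.1 p.2) := by
            rw [Finset.mul_sum, Finset.sum_mul]
        _ ≤ ε * t ^ 2 * (M * r ^ nn p.1 p.2) := by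
            refine mul_le_mul_of_nonneg_right
              (mul_le_mul_of_nonneg_left (hrow p.1) hε0) ?_
            exact mul_nonneg hM0 (pow_nonneg hr0.le _)
        _ = ε * t ^ 2 * M * r ^ nn p.1 p.2 := by ring
    calc ‖B p.1 p.2‖
        ≤ ‖(1 : Matrix Γ Γ ℂ) p.1 p.2‖ + ‖(R * B) p.1 p.2‖ := by
          rw [hBe]
          simpa using
            norm_sub_le ((1 : Matrix Γ Γ ℂ) p.1 p.2) ((R * B) p.1 p.2)
      _ ≤ r ^ nn p.1 p.2 + ε * t ^ 2 * M * r ^ nn p.1 p.2 := add_le_add h1 h2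
      _ = r ^ nn p.1 p.2 * (1 + ε * t ^ 2 * M) := by ring
  have hM2 : M ≤ 2 := by
    have h1 : M * r ^ nn p.1 p.2 ≤ r ^ nn p.1 p.2 * (1 + ε * t ^ 2 * M) :=
      hMB ▸ hent
    have hrp : 0 < r ^ nn p.1 p.2 := pow_pos hr0 _
    have h2 : M ≤ 1 + ε * t ^ 2 * M := by
      have := (mul_le_mul_iff_of_pos_right hrp).mp (by linarith [h1] : M * r ^ nn p.1 p.2 ≤ (1 + ε * t ^ 2 * M) * r ^ nn p.1 p.2)
      exact this
    have h3 : ε * t ^ 2 * M ≤ (1 / 2) * M :=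
      mul_le_mul_of_nonneg_right (hεhalf hε0) hM0
    linarith
  have hgoal : ‖B k k'‖ ≤ 2 * r ^ nn k k' := by
    refine le_trans (hMle k k') ?_
    exact mul_le_mul_of_nonneg_right hM2 (pow_nonneg hr0.le _)
  rw [hcast, hq4]
  exact hgoal
end

section
/- Let Γ be a finite subset of ℤ², let 0 < q < 1/2, and let Q = (Q_{k,k'})_{k,k'∈Γ} be a complex matrix such that Q_{k,k'} = 0 unless k' − k ∈ {(2,0), (0,2)}, and |Q_{k,k'}| ≤ q for all k, k'. Then I + Q is invertible (indeed Q is nilpotent), (I + Q)^{−1}_{k,k'} = 0 unless k' − k = (2a, 2b) for some integers a, b ≥ 0, and |(I + Q)^{−1}_{k,k'}| ≤ (2q)^{|k−k'|₁/2} for all k ≠ k', with diagonal entries equal to 1. -/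
/-- for a matrix `Q` supported on the shifts `2e₁, 2e₂` of `ℤ²` with
entries bounded by `q < 1/2`, `Q` is nilpotent, `I + Q` is invertible, the inverse is
supported on nonnegative even shifts, has unit diagonal, and its off-diagonal entries
are bounded by `(2q)^{|k−k'|₁/2}`. -/
theorem nilpotent_inverse_decay (Γ : Finset (ℤ × ℤ)) (q : ℝ) (hq0 : 0 < q)
    (hq : q < 1 / 2) (Q : Matrix Γ Γ ℂ)
    (hsupp : ∀ k k' : Γ, Q k k' ≠ 0 →
      ((k' : ℤ × ℤ).1 - (k : ℤ × ℤ).1, (k' : ℤ × ℤ).2 - (k : ℤ × ℤ).2) = ((2 : ℤ), (0 : ℤ)) ∨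
      ((k' : ℤ × ℤ).1 - (k : ℤ × ℤ).1, (k' : ℤ × ℤ).2 - (k : ℤ × ℤ).2) = ((0 : ℤ), (2 : ℤ)))
    (hbd : ∀ k k' : Γ, ‖Q k k'‖ ≤ q) :
    IsNilpotent Q ∧
    IsUnit (1 + Q) ∧
    (∀ k k' : Γ, (1 + Q)⁻¹ k k' ≠ 0 →
      ∃ a b : ℕ, (k' : ℤ × ℤ).1 - (k : ℤ × ℤ).1 = 2 * (a : ℤ) ∧
        (k' : ℤ × ℤ).2 - (k : ℤ × ℤ).2 = 2 * (b : ℤ)) ∧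
    (∀ k : Γ, (1 + Q)⁻¹ k k = 1) ∧
    (∀ k k' : Γ, k ≠ k' → ‖(1 + Q)⁻¹ k k'‖
      ≤ (2 * q) ^ (((|(k : ℤ × ℤ).1 - (k' : ℤ × ℤ).1| + |(k : ℤ × ℤ).2 - (k' : ℤ × ℤ).2| : ℤ) : ℝ) / 2)) := by
  classical
  -- key lemma on powers of Q
  have key : ∀ n : ℕ, ∀ k k' : Γ,
      ((Q ^ n) k k' ≠ 0 → ∃ a b : ℕ, a + b = n ∧
        (k' : ℤ × ℤ).1 - (k : ℤ × ℤ).1 = 2 * (a : ℤ) ∧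
        (k' : ℤ × ℤ).2 - (k : ℤ × ℤ).2 = 2 * (b : ℤ)) ∧
      ‖(Q ^ n) k k'‖ ≤ (2 * q) ^ n := by
    intro n
    induction n with
    | zero =>
      intro k k'
      by_cases hkk : k = k'
      · subst hkk
        refine ⟨fun _ => ⟨0, 0, rfl, by simp, by simp⟩, ?_⟩
        simp [Matrix.one_apply_eq]
      · refine ⟨fun h => absurd (by simpa using h) (by simp [Matrix.one_apply_ne' (Ne.symm hkk)]), ?_⟩
        simp [Matrix.one_apply_ne hkk]
    | succ n ih =>
      intro k k'
      have hmul : (Q ^ (n + 1)) k k' = ∑ j : Γ, Q k j * (Q ^ n) j k' := by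
        rw [pow_succ']; rfl
      constructor
      · intro h
        rw [hmul] at h
        obtain ⟨j, _, hne⟩ := Finset.exists_ne_zero_of_sum_ne_zero h
        have h1 : Q k j ≠ 0 := fun h0 => hne (by simp [h0])
        have h2 : (Q ^ n) j k' ≠ 0 := fun h0 => hne (by simp [h0])
        obtain ⟨a, b, hab, ha, hb⟩ := (ih j k').1 h2
        rcases hsupp k j h1 with hcase | hcase <;> rw [Prod.mk.injEq] at hcase
        · exact ⟨a + 1, b, by omega, by push_cast; omega, by push_cast; omega⟩
        · exact ⟨a, b + 1, by omega, by push_cast; omega, by push_cast; omega⟩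
      · rw [hmul]
        set S : Finset Γ := Finset.univ.filter (fun j => Q k j ≠ 0) with hS
        have hcard : S.card ≤ 2 := by
          have hsub : ∀ j ∈ S, (j : ℤ × ℤ) ∈
              ({((k : ℤ × ℤ).1 + 2, (k : ℤ × ℤ).2), ((k : ℤ × ℤ).1, (k : ℤ × ℤ).2 + 2)} :
                Finset (ℤ × ℤ)) := by
            intro j hj
            have hQ : Q k j ≠ 0 := (Finset.mem_filter.mp hj).2
            rcases hsupp k j hQ with hcase | hcase <;> rw [Prod.mk.injEq] at hcase <;>
              simp only [Finset.mem_insert, Finset.mem_singleton]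
            · left; exact Prod.ext (by omega) (by omega)
            · right; exact Prod.ext (by omega) (by omega)
          calc S.card ≤ ({((k : ℤ × ℤ).1 + 2, (k : ℤ × ℤ).2),
                ((k : ℤ × ℤ).1, (k : ℤ × ℤ).2 + 2)} : Finset (ℤ × ℤ)).card :=
                Finset.card_le_card_of_injOn (fun j => (j : ℤ × ℤ)) hsub
                  (fun a _ b _ hab => Subtype.ext hab)
            _ ≤ 2 := le_trans (Finset.card_insert_le _ _) (by simp)
        calc ‖∑ j : Γ, Q k j * (Q ^ n) j k'‖
            ≤ ∑ j : Γ, ‖Q k j * (Q ^ n) j k'‖ := norm_sum_le _ _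
          _ = ∑ j ∈ S, ‖Q k j * (Q ^ n) j k'‖ := by
              refine (Finset.sum_filter_of_ne ?_).symm
              intro j _ hj h0
              exact hj (by simp [h0])
          _ ≤ ∑ _j ∈ S, q * (2 * q) ^ n := by
              refine Finset.sum_le_sum fun j _ => ?_
              rw [norm_mul]
              exact mul_le_mul (hbd k j) ((ih j k').2) (norm_nonneg _) hq0.le
          _ = S.card * (q * (2 * q) ^ n) := by rw [Finset.sum_const, nsmul_eq_mul]
          _ ≤ 2 * (q * (2 * q) ^ n) := by
              have : (S.card : ℝ) ≤ 2 := by exact_mod_cast hcard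
              have hpos : (0 : ℝ) ≤ q * (2 * q) ^ n := by positivity
              exact mul_le_mul_of_nonneg_right this hpos
          _ = (2 * q) ^ (n + 1) := by ring
  -- nilpotency exponent
  obtain ⟨N, hN0, hN⟩ : ∃ N : ℕ, 0 < N ∧ ∀ k k' : Γ,
      ((k' : ℤ × ℤ).1 + (k' : ℤ × ℤ).2) - ((k : ℤ × ℤ).1 + (k : ℤ × ℤ).2) < 2 * N := by
    rcases isEmpty_or_nonempty Γ with hΓ | hΓ
    · exact ⟨1, one_pos, fun k => isEmptyElim k⟩
    · obtain ⟨kM, hkM⟩ := Finite.exists_max (fun k : Γ => (k : ℤ × ℤ).1 + (k : ℤ × ℤ).2)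
      obtain ⟨km, hkm⟩ := Finite.exists_min (fun k : Γ => (k : ℤ × ℤ).1 + (k : ℤ × ℤ).2)
      refine ⟨(((kM : ℤ × ℤ).1 + (kM : ℤ × ℤ).2) - ((km : ℤ × ℤ).1 + (km : ℤ × ℤ).2)).toNat + 1,
        Nat.succ_pos _, fun k k' => ?_⟩
      have h1 := hkM k'
      have h2 := hkm k
      have h3 := Int.self_le_toNat (((kM : ℤ × ℤ).1 + (kM : ℤ × ℤ).2) -
        ((km : ℤ × ℤ).1 + (km : ℤ × ℤ).2))
      push_cast
      omega
  have hQN : Q ^ N = 0 := by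
    ext k k'
    rw [Matrix.zero_apply]
    by_contra h
    obtain ⟨a, b, hab, ha, hb⟩ := (key N k k').1 h
    have := hN k k'
    omega
  -- the inverse as a finite geometric series
  set B : Matrix Γ Γ ℂ := ∑ i ∈ Finset.range N, (-1 : ℂ) ^ i • Q ^ i with hBdef
  have hsm : ∀ i : ℕ, (-1 : ℂ) ^ i • Q ^ i = (-Q) ^ i := by
    intro i
    rcases Nat.even_or_odd i with h | h
    · rw [h.neg_pow, h.neg_pow, one_pow, one_smul]
    · rw [h.neg_pow, h.neg_pow, one_pow, neg_smul, one_smul]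
  have hBsum : B = ∑ i ∈ Finset.range N, (-Q) ^ i :=
    Finset.sum_congr rfl fun i _ => hsm i
  have hnegQN : (-Q) ^ N = 0 := by rw [← hsm, hQN, smul_zero]
  have hinv : (1 + Q) * B = 1 := by
    have e : (1 + Q : Matrix Γ Γ ℂ) = -(-Q - 1) := by rw [neg_sub, sub_neg_eq_add]
    rw [hBsum, e, neg_mul, mul_geom_sum, hnegQN, zero_sub, neg_neg]
  have hinvEq : (1 + Q)⁻¹ = B := Matrix.inv_eq_right_inv hinv
  have hBapp : ∀ k k' : Γ, B k k' = ∑ i ∈ Finset.range N, (-1 : ℂ) ^ i * (Q ^ i) k k' := by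
    intro k k'
    rw [hBdef, Matrix.sum_apply]
    exact Finset.sum_congr rfl fun i _ => by rw [Matrix.smul_apply, smul_eq_mul]
  refine ⟨⟨N, hQN⟩, ?_, ?_, ?_, ?_⟩
  · exact ⟨⟨1 + Q, B, hinv, mul_eq_one_comm.mp hinv⟩, rfl⟩
  · intro k k' h
    rw [hinvEq, hBapp] at h
    obtain ⟨i, _, hne⟩ := Finset.exists_ne_zero_of_sum_ne_zero h
    have h2 : (Q ^ i) k k' ≠ 0 := fun h0 => hne (by simp [h0])
    obtain ⟨a, b, _, ha, hb⟩ := (key i k k').1 h2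
    exact ⟨a, b, ha, hb⟩
  · intro k
    rw [hinvEq, hBapp]
    rw [Finset.sum_eq_single_of_mem 0 (Finset.mem_range.mpr hN0)]
    · simp [Matrix.one_apply_eq]
    · intro i _ hi
      have h0 : (Q ^ i) k k = 0 := by
        by_contra h
        obtain ⟨a, b, hab, ha, hb⟩ := (key i k k).1 h
        omega
      rw [h0, mul_zero]
  · intro k k' hkk
    rw [hinvEq, hBapp]
    set D : ℤ := |(k : ℤ × ℤ).1 - (k' : ℤ × ℤ).1| + |(k : ℤ × ℤ).2 - (k' : ℤ × ℤ).2| with hD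
    have hz : ∀ i : ℕ, 2 * (i : ℤ) ≠ D → (Q ^ i) k k' = 0 := by
      intro i hi
      by_contra h
      obtain ⟨a, b, hab, ha, hb⟩ := (key i k k').1 h
      apply hi
      have e1 : |(k : ℤ × ℤ).1 - (k' : ℤ × ℤ).1| = 2 * (a : ℤ) := by
        rw [abs_sub_comm, ha, abs_of_nonneg (by positivity)]
      have e2 : |(k : ℤ × ℤ).2 - (k' : ℤ × ℤ).2| = 2 * (b : ℤ) := by
        rw [abs_sub_comm, hb, abs_of_nonneg (by positivity)]
      rw [hD, e1, e2]
      push_cast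
      omega
    have hrw : ∑ i ∈ Finset.filter (fun i : ℕ => 2 * (i : ℤ) = D) (Finset.range N),
          (-1 : ℂ) ^ i * (Q ^ i) k k' =
        ∑ i ∈ Finset.range N, (-1 : ℂ) ^ i * (Q ^ i) k k' := by
      refine Finset.sum_filter_of_ne ?_
      intro i _ hi
      by_contra h0
      exact hi (by rw [hz i h0, mul_zero])
    rw [← hrw]
    set F := Finset.filter (fun i : ℕ => 2 * (i : ℤ) = D) (Finset.range N) with hF
    have hRHSnonneg : (0 : ℝ) ≤ (2 * q) ^ (((D : ℤ) : ℝ) / 2) :=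
      Real.rpow_nonneg (by positivity) _
    have hcard1 : F.card ≤ 1 := by
      refine Finset.card_le_one.mpr fun a ha b hb => ?_
      have ha' := (Finset.mem_filter.mp ha).2
      have hb' := (Finset.mem_filter.mp hb).2
      omega
    obtain ⟨x, hx⟩ := Finset.card_le_one_iff_subset_singleton.mp hcard1
    rcases Finset.subset_singleton_iff.mp hx with hFe | hFe
    · rw [hFe, Finset.sum_empty, norm_zero]
      exact hRHSnonneg
    · rw [hFe, Finset.sum_singleton]
      have hxF : x ∈ F := hFe ▸ Finset.mem_singleton_self x
      have hx2 : 2 * (x : ℤ) = D := (Finset.mem_filter.mp hxF).2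
      have hexp : ((D : ℤ) : ℝ) / 2 = (x : ℝ) := by
        rw [← hx2]; push_cast; ring
      rw [hexp, Real.rpow_natCast]
      calc ‖(-1 : ℂ) ^ x * (Q ^ x) k k'‖
          = ‖(Q ^ x) k k'‖ := by
            rw [norm_mul, norm_pow, norm_neg, norm_one, one_pow, one_mul]
        _ ≤ (2 * q) ^ x := (key x k k').2
end
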